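/- arXiv:2311.17714 — 4 statements merged into one kernel-verified Lean document; each statement's English description precedes it below -/
import Mathlib

section
/- Let $N$ be a positive integer and $f$ a trigonometric polynomial of degree at most $d$ (i.e., $f(t) = \sum_{|k| \le d} c_k e^{2i\pi k t}$). Then $\left| \int_0^1 |f(t)|\,dt - \frac{1}{N}\sum_{j=0}^{N-1}\left|f\left(\frac{j}{N}\right)\right| \right| \le \frac{2\pi d}{N}\int_0^1 |f(t)|\,dt$. -/
open Real MeasureTheory Finset

set_option linter.unreachableTactic false
set_option linter.unusedTactic false


noncomputable def ee (m : ℤ) (t : ℝ) : ℂ := Complex.exp (2 * (π:ℂ) * Complex.I * (m:ℂ) * t)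

lemma ee_cont (m : ℤ) : Continuous (ee m) := by
  unfold ee; fun_prop

lemma ee_add (m n : ℤ) (t : ℝ) : ee m t * ee n t = ee (m + n) t := by
  unfold ee; rw [← Complex.exp_add, ← add_mul]; push_cast; ring_nf

lemma ee_norm (m : ℤ) (t : ℝ) : ‖ee m t‖ = 1 := by
  unfold ee
  rw [Complex.norm_exp]
  norm_num [Complex.mul_re, Complex.mul_im]

lemma ee_hasDeriv (m : ℤ) (t : ℝ) :
    HasDerivAt (ee m) (2 * (π:ℂ) * Complex.I * (m:ℂ) * ee m t) t := by
  unfold ee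
  have h1 : HasDerivAt (fun t : ℝ => ((t:ℂ))) 1 t := by
    simpa using (hasDerivAt_id (t:ℂ)).comp_ofReal
  have h2 : HasDerivAt (fun t : ℝ => 2 * (π:ℂ) * Complex.I * (m:ℂ) * t)
      (2 * (π:ℂ) * Complex.I * (m:ℂ)) t := by
    simpa using h1.const_mul (2 * (π:ℂ) * Complex.I * (m:ℂ))
  simpa [mul_comm] using h2.cexp

lemma ee_int (m : ℤ) (k : ℤ) : ee m k = 1 := by
  unfold ee
  have : 2 * (π:ℂ) * Complex.I * (m:ℂ) * (k:ℝ) = (m * k : ℤ) * (2 * π * Complex.I) := by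
    push_cast; ring
  rw [this, Complex.exp_int_mul_two_pi_mul_I]

lemma ee_integral (m : ℤ) : (∫ t in (0:ℝ)..1, ee m t) = if m = 0 then 1 else 0 := by
  rcases eq_or_ne m 0 with rfl | hm
  · simp [ee]
  · have key : ∀ t ∈ Set.uIcc (0:ℝ) 1, HasDerivAt (fun t => ee m t / (2 * (π:ℂ) * Complex.I * (m:ℂ))) (ee m t) t := by
      intro t _
      have := (ee_hasDeriv m t).div_const (2 * (π:ℂ) * Complex.I * (m:ℂ))
      have hne : 2 * (π:ℂ) * Complex.I * (m:ℂ) ≠ 0 := by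
        simp [Real.pi_ne_zero, Complex.I_ne_zero, Complex.ofReal_ne_zero, hm]
      rwa [mul_div_cancel_left₀ _ hne] at this
    rw [intervalIntegral.integral_eq_sub_of_hasDerivAt key ((ee_cont m).intervalIntegrable 0 1)]
    rw [if_neg hm]
    rw [show (1:ℝ) = ((1:ℤ):ℝ) by norm_num, show (0:ℝ) = ((0:ℤ):ℝ) by norm_num,
      ee_int, ee_int]
    ring

lemma count_aux (d : ℕ) (m : ℤ) :
    (∑ j ∈ range d, ∑ l ∈ range d, (if (j:ℤ) - l = m then (1:ℂ) else 0))
      = (((d:ℤ) - |m|).toNat : ℂ) := by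
  have h1 : ∀ j ∈ range d, (∑ l ∈ range d, (if (j:ℤ) - l = m then (1:ℂ) else 0))
      = (if m ≤ (j:ℤ) ∧ (j:ℤ) < d + m then 1 else 0) := by
    intro j hj
    simp only [mem_range] at hj
    rcases le_or_gt m j with hle | hlt
    · rcases lt_or_ge (j:ℤ) (d + m) with h2 | h2
      · have hl : ((j:ℤ) - m).toNat ∈ range d := by simp only [mem_range]; omega
        rw [Finset.sum_eq_single_of_mem _ hl]
        · simp only [if_pos (by omega : m ≤ (j:ℤ) ∧ (j:ℤ) < d + m)]
          rw [if_pos (by omega)]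
        · intro l _ hne
          rw [if_neg (by omega)]
      · rw [if_neg (by omega), Finset.sum_eq_zero]
        intro l hl; simp only [mem_range] at hl
        rw [if_neg (by omega)]
    · rw [if_neg (by omega), Finset.sum_eq_zero]
      intro l hl; simp only [mem_range] at hl
      rw [if_neg (by omega)]
  rw [Finset.sum_congr rfl h1, Finset.sum_boole]
  have h2 : (range d).filter (fun j : ℕ => m ≤ (j:ℤ) ∧ (j:ℤ) < (d:ℤ) + m)
      = Finset.Ico (m.toNat) (((d:ℤ) + min m 0).toNat) := by
    ext j
    simp only [mem_filter, mem_range, Finset.mem_Ico]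
    omega
  rw [h2, Nat.card_Ico]
  congr 1
  rw [Int.abs_eq_natAbs]
  omega

lemma ee_conj (m : ℤ) (t : ℝ) : (starRingEnd ℂ) (ee m t) = ee (-m) t := by
  unfold ee
  rw [← Complex.exp_conj]
  congr 1
  simp only [map_mul, Complex.conj_I, Complex.conj_ofReal, map_ofNat, map_intCast]
  push_cast
  ring

lemma ee_sub (m : ℤ) (x t : ℝ) : ee m (x - t) = ee m x * ee (-m) t := by
  unfold ee
  rw [← Complex.exp_add]
  congr 1
  push_cast
  ring

lemma ee_periodic (m : ℤ) (x : ℝ) : ee m (x + 1) = ee m x := by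
  unfold ee
  rw [show ((x:ℝ) + 1 : ℝ) = ((x + 1 : ℝ) : ℝ) by norm_num]
  push_cast
  rw [mul_add, Complex.exp_add, mul_one]
  have : Complex.exp (2 * (π:ℂ) * Complex.I * (m:ℂ)) = 1 := by
    have := ee_int m 1
    unfold ee at this
    simpa using this
  rw [this, mul_one]

noncomputable def gker (d : ℕ) (t : ℝ) : ℂ :=
  2 * (π:ℂ) * Complex.I * ∑ j ∈ range d, ∑ l ∈ range d,
    (ee ((d:ℤ) + j - l) t - ee ((j:ℤ) - l - d) t)

lemma gker_cont (d : ℕ) : Continuous (gker d) := by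
  unfold gker
  exact continuous_const.mul (continuous_finset_sum _ fun j _ =>
    continuous_finset_sum _ fun l _ => (ee_cont _).sub (ee_cont _))

lemma gker_coeff (d : ℕ) (k : ℤ) (hk : -(d:ℤ) ≤ k ∧ k ≤ d) :
    (∫ t in (0:ℝ)..1, gker d t * ee (-k) t) = 2 * (π:ℂ) * Complex.I * k := by
  have h1 : ∀ t : ℝ, gker d t * ee (-k) t
      = 2 * (π:ℂ) * Complex.I * ∑ j ∈ range d, ∑ l ∈ range d,
        (ee ((d:ℤ) + j - l - k) t - ee ((j:ℤ) - l - d - k) t) := by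
    intro t
    unfold gker
    rw [mul_assoc, Finset.sum_mul]
    congr 1
    refine Finset.sum_congr rfl fun j _ => ?_
    rw [Finset.sum_mul]
    refine Finset.sum_congr rfl fun l _ => ?_
    rw [sub_mul, ee_add, ee_add]
    congr 2 <;> ring
  simp only [h1]
  rw [intervalIntegral.integral_const_mul]
  rw [intervalIntegral.integral_finset_sum (f := fun (j : ℕ) t => ∑ l ∈ range d,
    (ee ((d:ℤ) + j - l - k) t - ee ((j:ℤ) - l - d - k) t)) (fun j _ =>
    (continuous_finset_sum _ fun l _ => (ee_cont _).sub (ee_cont _)).intervalIntegrable 0 1)]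
  have h2 : ∀ j ∈ range d, (∫ t in (0:ℝ)..1, ∑ l ∈ range d,
      (ee ((d:ℤ) + j - l - k) t - ee ((j:ℤ) - l - d - k) t))
      = ∑ l ∈ range d, ((if ((j:ℤ) - l = k - d) then (1:ℂ) else 0)
          - (if ((j:ℤ) - l = k + d) then (1:ℂ) else 0)) := by
    intro j _
    rw [intervalIntegral.integral_finset_sum (f := fun (l : ℕ) t =>
      ee ((d:ℤ) + j - l - k) t - ee ((j:ℤ) - l - d - k) t) (fun l _ =>
      ((ee_cont _).sub (ee_cont _)).intervalIntegrable 0 1)]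
    refine Finset.sum_congr rfl fun l _ => ?_
    rw [intervalIntegral.integral_sub ((ee_cont _).intervalIntegrable 0 1)
      ((ee_cont _).intervalIntegrable 0 1), ee_integral, ee_integral]
    have e1 : ((d:ℤ) + j - l - k = 0) ↔ ((j:ℤ) - l = k - d) := by omega
    have e2 : ((j:ℤ) - l - d - k = 0) ↔ ((j:ℤ) - l = k + d) := by omega
    rw [if_congr e1 rfl rfl, if_congr e2 rfl rfl]
  rw [Finset.sum_congr rfl h2]
  simp only [Finset.sum_sub_distrib]
  rw [count_aux, count_aux]
  have : ((((d:ℤ) - |k - d|).toNat : ℤ) - (((d:ℤ) - |k + d|).toNat : ℤ)) = k := by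
    rw [Int.abs_eq_natAbs, Int.abs_eq_natAbs]
    omega
  congr 1
  exact_mod_cast this

noncomputable def Ssum (d : ℕ) (t : ℝ) : ℂ := ∑ j ∈ range d, ee (j : ℤ) t

lemma Ssum_cont (d : ℕ) : Continuous (Ssum d) :=
  continuous_finset_sum _ fun j _ => ee_cont _

lemma gker_eq (d : ℕ) (t : ℝ) :
    gker d t = 2 * (π:ℂ) * Complex.I *
      ((ee (d:ℤ) t - ee (-(d:ℤ)) t) * (Ssum d t * (starRingEnd ℂ) (Ssum d t))) := by
  unfold gker Ssum
  congr 1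
  rw [map_sum, Finset.sum_mul_sum]
  rw [Finset.mul_sum]
  refine Finset.sum_congr rfl fun j _ => ?_
  rw [Finset.mul_sum]
  refine Finset.sum_congr rfl fun l _ => ?_
  rw [ee_conj, ee_add, sub_mul, ee_add, ee_add]
  congr 2 <;> ring

lemma norm_two_pi_I : ‖(2 * (π:ℂ) * Complex.I)‖ = 2 * π := by
  simp [norm_mul, Real.pi_nonneg, abs_of_nonneg]

lemma gker_norm_le (d : ℕ) (t : ℝ) : ‖gker d t‖ ≤ 4 * π * ‖Ssum d t‖ ^ 2 := by
  rw [gker_eq, Complex.mul_conj]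
  rw [norm_mul, norm_two_pi_I, norm_mul]
  have h2 : ‖ee (d:ℤ) t - ee (-(d:ℤ)) t‖ ≤ 2 := by
    calc ‖ee (d:ℤ) t - ee (-(d:ℤ)) t‖ ≤ ‖ee (d:ℤ) t‖ + ‖ee (-(d:ℤ)) t‖ := norm_sub_le _ _
      _ = 2 := by rw [ee_norm, ee_norm]; norm_num
  have h3 : ‖((Complex.normSq (Ssum d t) : ℝ) : ℂ)‖ = ‖Ssum d t‖ ^ 2 := by
    rw [Complex.norm_real, Real.norm_eq_abs, abs_of_nonneg (Complex.normSq_nonneg _), Complex.normSq_eq_norm_sq]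
  rw [h3]
  calc 2 * π * (‖ee (d:ℤ) t - ee (-(d:ℤ)) t‖ * ‖Ssum d t‖ ^ 2)
      ≤ 2 * π * (2 * ‖Ssum d t‖ ^ 2) := by
        apply mul_le_mul_of_nonneg_left _ (by positivity)
        exact mul_le_mul_of_nonneg_right h2 (by positivity)
    _ = 4 * π * ‖Ssum d t‖ ^ 2 := by ring

lemma Ssum_int (d : ℕ) : (∫ t in (0:ℝ)..1, Ssum d t * (starRingEnd ℂ) (Ssum d t)) = (d : ℂ) := by
  have h1 : ∀ t : ℝ, Ssum d t * (starRingEnd ℂ) (Ssum d t)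
      = ∑ j ∈ range d, ∑ l ∈ range d, ee ((j:ℤ) - l) t := by
    intro t
    unfold Ssum
    rw [map_sum, Finset.sum_mul_sum]
    refine Finset.sum_congr rfl fun j _ => Finset.sum_congr rfl fun l _ => ?_
    rw [ee_conj, ee_add]
    norm_num [sub_eq_add_neg]
  simp only [h1]
  rw [intervalIntegral.integral_finset_sum (fun j _ =>
    (continuous_finset_sum _ fun l _ => ee_cont _).intervalIntegrable 0 1)]
  have h2 : ∀ j ∈ range d, (∫ t in (0:ℝ)..1, ∑ l ∈ range d, ee ((j:ℤ) - l) t)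
      = ∑ l ∈ range d, (if ((j:ℤ) - l = 0) then (1:ℂ) else 0) := by
    intro j _
    rw [intervalIntegral.integral_finset_sum (fun l _ => (ee_cont _).intervalIntegrable 0 1)]
    exact Finset.sum_congr rfl fun l _ => ee_integral _
  rw [Finset.sum_congr rfl h2, count_aux]
  norm_num

lemma gker_l1 (d : ℕ) : (∫ t in (0:ℝ)..1, ‖gker d t‖) ≤ 4 * π * d := by
  have h1 : (∫ t in (0:ℝ)..1, ‖gker d t‖) ≤ ∫ t in (0:ℝ)..1, 4 * π * ‖Ssum d t‖ ^ 2 := by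
    apply intervalIntegral.integral_mono_on zero_le_one
      ((gker_cont d).norm.intervalIntegrable 0 1)
      ((continuous_const.mul ((Ssum_cont d).norm.pow 2)).intervalIntegrable 0 1)
    intro t _
    exact gker_norm_le d t
  have hScont : Continuous (fun t : ℝ => Ssum d t * (starRingEnd ℂ) (Ssum d t)) :=
    (Ssum_cont d).mul (Complex.continuous_conj.comp (Ssum_cont d))
  have h2 : (∫ t in (0:ℝ)..1, ‖Ssum d t‖ ^ 2) = d := by
    have h3 : ∀ t : ℝ, ‖Ssum d t‖ ^ 2 = (Ssum d t * (starRingEnd ℂ) (Ssum d t)).re := by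
      intro t
      rw [Complex.mul_conj, Complex.ofReal_re, Complex.normSq_eq_norm_sq]
    simp only [h3]
    have key := (Complex.reCLM).intervalIntegral_comp_comm
      (hScont.intervalIntegrable (μ := volume) 0 1)
    simp only [Complex.reCLM_apply] at key
    rw [key, Ssum_int]
    simp
  rw [intervalIntegral.integral_const_mul, h2] at h1
  linarith [h1]

lemma conv_ident (d : ℕ) (c : ℤ → ℂ) (f : ℝ → ℂ)
    (hf : ∀ t : ℝ, f t = ∑ k ∈ Finset.Icc (-(d:ℤ)) d, c k * ee k t) (x : ℝ) :
    (∫ t in (0:ℝ)..1, gker d t * f (x - t))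
      = ∑ k ∈ Finset.Icc (-(d:ℤ)) d, c k * (2 * (π:ℂ) * Complex.I * k * ee k x) := by
  have h1 : ∀ t : ℝ, gker d t * f (x - t)
      = ∑ k ∈ Finset.Icc (-(d:ℤ)) d, (c k * ee k x) * (gker d t * ee (-k) t) := by
    intro t
    rw [hf (x - t), Finset.mul_sum]
    refine Finset.sum_congr rfl fun k _ => ?_
    rw [ee_sub]
    ring
  simp only [h1]
  rw [intervalIntegral.integral_finset_sum (f := fun k t => c k * ee k x * (gker d t * ee (-k) t)) (fun k _ =>
    (continuous_const.mul ((gker_cont d).mul (ee_cont _))).intervalIntegrable 0 1)]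
  refine Finset.sum_congr rfl fun k hk => ?_
  rw [intervalIntegral.integral_const_mul, gker_coeff d k (by
    simp only [Finset.mem_Icc] at hk; exact hk)]
  ring

lemma shift_int (f : ℝ → ℂ) (hper : Function.Periodic f 1) (t : ℝ) :
    (∫ x in (0:ℝ)..1, ‖f (x - t)‖) = ∫ x in (0:ℝ)..1, ‖f x‖ := by
  rw [intervalIntegral.integral_comp_sub_right (fun x => ‖f x‖) t]
  have hper' : Function.Periodic (fun x => ‖f x‖) 1 := fun x => by simp [hper x]
  have h := hper'.intervalIntegral_add_eq (0 - t) 0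
  convert h using 2 <;> ring

lemma myBernstein (d : ℕ) (c : ℤ → ℂ) (f fd : ℝ → ℂ)
    (hf : ∀ t : ℝ, f t = ∑ k ∈ Finset.Icc (-(d:ℤ)) d, c k * ee k t)
    (hfd : ∀ t : ℝ, fd t = ∑ k ∈ Finset.Icc (-(d:ℤ)) d,
      c k * (2 * (π:ℂ) * Complex.I * k * ee k t)) :
    (∫ t in (0:ℝ)..1, ‖fd t‖) ≤ 4 * π * d * ∫ t in (0:ℝ)..1, ‖f t‖ := by
  have hfc : Continuous f := by
    have : f = fun t => ∑ k ∈ Finset.Icc (-(d:ℤ)) d, c k * ee k t := funext hf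
    rw [this]
    exact continuous_finset_sum _ fun k _ => continuous_const.mul (ee_cont _)
  have hfdc : Continuous fd := by
    have : fd = fun t => ∑ k ∈ Finset.Icc (-(d:ℤ)) d,
        c k * (2 * (π:ℂ) * Complex.I * k * ee k t) := funext hfd
    rw [this]
    exact continuous_finset_sum _ fun k _ =>
      continuous_const.mul (continuous_const.mul (ee_cont _))
  have hper : Function.Periodic f 1 := by
    intro x
    rw [hf, hf]
    exact Finset.sum_congr rfl fun k _ => by rw [ee_periodic]
  set μ : Measure ℝ := volume.restrict (Set.Ioc (0:ℝ) 1) with hμ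
  set C : ℝ := ∫ t in (0:ℝ)..1, ‖f t‖ with hC
  have hC0 : 0 ≤ C := intervalIntegral.integral_nonneg zero_le_one (fun t _ => norm_nonneg _)
  -- the double integrand
  set H : ℝ × ℝ → ℝ := fun p => ‖gker d p.2‖ * ‖f (p.1 - p.2)‖ with hH
  have hHc : Continuous H := by
    apply Continuous.mul
    · exact (gker_cont d).norm.comp continuous_snd
    · exact (hfc.norm).comp (continuous_fst.sub continuous_snd)
  have hHi : Integrable H (μ.prod μ) := by
    rw [hμ, Measure.prod_restrict]
    exact ((hHc.continuousOn).integrableOn_compact' (isCompact_Icc.prod isCompact_Icc)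
      (measurableSet_Icc.prod measurableSet_Icc)).mono_set
      (Set.prod_mono Set.Ioc_subset_Icc_self Set.Ioc_subset_Icc_self)
  -- step 1: pointwise representation and bound
  have step1 : ∀ x : ℝ, ‖fd x‖ ≤ ∫ t, H (x, t) ∂μ := by
    intro x
    have hrep : fd x = ∫ t, gker d t * f (x - t) ∂μ := by
      rw [hμ, ← intervalIntegral.integral_of_le zero_le_one, conv_ident d c f hf x, hfd]
    rw [hrep]
    calc ‖∫ t, gker d t * f (x - t) ∂μ‖ ≤ ∫ t, ‖gker d t * f (x - t)‖ ∂μ :=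
          norm_integral_le_integral_norm _
      _ = ∫ t, H (x, t) ∂μ := by simp only [hH, norm_mul]
  -- step 2: integrate
  have key : (∫ x, ‖fd x‖ ∂μ) ≤ ∫ t, ‖gker d t‖ * C ∂μ := by
    calc (∫ x, ‖fd x‖ ∂μ) ≤ ∫ x, (∫ t, H (x, t) ∂μ) ∂μ := by
          apply integral_mono_of_nonneg
          · exact Filter.Eventually.of_forall fun x => norm_nonneg _
          · exact hHi.integral_prod_left
          · exact Filter.Eventually.of_forall step1
      _ = ∫ t, (∫ x, H (x, t) ∂μ) ∂μ := integral_integral_swap hHi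
      _ = ∫ t, ‖gker d t‖ * C ∂μ := by
          apply integral_congr_ae
          apply Filter.Eventually.of_forall
          intro t
          simp only [hH]
          rw [integral_const_mul]
          congr 1
          rw [hC, hμ, ← intervalIntegral.integral_of_le zero_le_one]
          exact shift_int f hper t
  have hgl1 := gker_l1 d
  rw [intervalIntegral.integral_of_le zero_le_one] at hgl1
  have last : (∫ t, ‖gker d t‖ * C ∂μ) ≤ 4 * π * d * C := by
    rw [integral_mul_const]
    calc (∫ t, ‖gker d t‖ ∂μ) * C ≤ (4 * π * d) * C := by
          apply mul_le_mul_of_nonneg_right _ hC0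
          exact hgl1
      _ = 4 * π * d * C := rfl
  rw [intervalIntegral.integral_of_le zero_le_one]
  calc (∫ x, ‖fd x‖ ∂μ) ≤ ∫ t, ‖gker d t‖ * C ∂μ := key
    _ ≤ 4 * π * d * C := last

lemma quadrature (N : ℕ) (hN : 0 < N) (f fd : ℝ → ℂ)
    (hder : ∀ t : ℝ, HasDerivAt f (fd t) t)
    (hfc : Continuous f) (hfdc : Continuous fd)
    (hper : f 1 = f 0) :
    |(∫ t in (0:ℝ)..1, ‖f t‖) - (1 / N) * ∑ j ∈ range N, ‖f (j / N)‖|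
      ≤ (1 / (2 * N)) * ∫ t in (0:ℝ)..1, ‖fd t‖ := by
  have hN' : (0:ℝ) < N := by exact_mod_cast hN
  set a : ℕ → ℝ := fun j => (j:ℝ) / N with ha
  have ha0 : a 0 = 0 := by simp [ha]
  have haN : a N = 1 := by simp only [ha]; exact div_self hN'.ne'
  have hlen : ∀ j : ℕ, a (j + 1) - a j = 1 / N := by
    intro j; simp only [ha]; push_cast; field_simp; ring
  have hmono : ∀ j : ℕ, a j ≤ a (j + 1) := by
    intro j
    have h1 := hlen j
    have h2 : (0:ℝ) < 1 / N := by positivity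
    linarith
  -- decomposition of the integral of ‖f‖ and ‖fd‖
  have hsplitf : (∫ t in (0:ℝ)..1, ‖f t‖)
      = ∑ j ∈ range N, ∫ t in a j..a (j + 1), ‖f t‖ := by
    rw [intervalIntegral.sum_integral_adjacent_intervals
      (fun k _ => (hfc.norm.intervalIntegrable _ _)), ha0, haN]
  have hsplitfd : (∫ t in (0:ℝ)..1, ‖fd t‖)
      = ∑ j ∈ range N, ∫ t in a j..a (j + 1), ‖fd t‖ := by
    rw [intervalIntegral.sum_integral_adjacent_intervals
      (fun k _ => (hfdc.norm.intervalIntegrable _ _)), ha0, haN]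
  -- shifted sum
  have hshift : ∑ j ∈ range N, ‖f (a (j + 1))‖ = ∑ j ∈ range N, ‖f (a j)‖ := by
    have h1 := Finset.sum_range_succ' (fun j => ‖f (a j)‖) N
    have h2 := Finset.sum_range_succ (fun j => ‖f (a j)‖) N
    have h3 : ‖f (a N)‖ = ‖f (a 0)‖ := by rw [ha0, haN, hper]
    rw [h2, h3] at h1
    linarith [h1]
  -- rewrite the Riemann sum as trapezoid sum
  have htrap : (1 / (N:ℝ)) * ∑ j ∈ range N, ‖f (a j)‖
      = ∑ j ∈ range N, (‖f (a j)‖ + ‖f (a (j + 1))‖) / (2 * N) := by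
    have h4 : ∑ j ∈ range N, (‖f (a j)‖ + ‖f (a (j + 1))‖) / (2 * (N:ℝ))
        = (∑ j ∈ range N, ‖f (a j)‖ + ∑ j ∈ range N, ‖f (a (j + 1))‖) / (2 * N) := by
      rw [← Finset.sum_add_distrib, Finset.sum_div]
    rw [h4, hshift]
    field_simp
    ring
  -- key per-interval bound
  have hkey : ∀ j ∈ range N,
      |(∫ t in a j..a (j + 1), ‖f t‖) - (‖f (a j)‖ + ‖f (a (j + 1))‖) / (2 * N)|
        ≤ (1 / (2 * N)) * ∫ t in a j..a (j + 1), ‖fd t‖ := by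
    intro j _
    set u := a j
    set v := a (j + 1)
    have huv : u ≤ v := hmono j
    have hlenj : v - u = 1 / N := hlen j
    set D : ℝ := ∫ t in u..v, ‖fd t‖ with hD
    have hpt : ∀ t ∈ Set.Icc u v, |‖f t‖ - (‖f u‖ + ‖f v‖) / 2| ≤ D / 2 := by
      intro t ht
      obtain ⟨htu, htv⟩ := ht
      have hA : ‖f t - f u‖ ≤ ∫ r in u..t, ‖fd r‖ := by
        have := intervalIntegral.integral_eq_sub_of_hasDerivAt
          (f := f) (f' := fd) (fun r _ => hder r) (hfdc.intervalIntegrable u t)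
        rw [← this]
        exact intervalIntegral.norm_integral_le_integral_norm htu
      have hB : ‖f v - f t‖ ≤ ∫ r in t..v, ‖fd r‖ := by
        have := intervalIntegral.integral_eq_sub_of_hasDerivAt
          (f := f) (f' := fd) (fun r _ => hder r) (hfdc.intervalIntegrable t v)
        rw [← this]
        exact intervalIntegral.norm_integral_le_integral_norm htv
      have hAB : (∫ r in u..t, ‖fd r‖) + (∫ r in t..v, ‖fd r‖) = D := by
        rw [hD]
        exact intervalIntegral.integral_add_adjacent_intervals
          (hfdc.norm.intervalIntegrable _ _) (hfdc.norm.intervalIntegrable _ _)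
      have h1 : |‖f t‖ - ‖f u‖| ≤ ∫ r in u..t, ‖fd r‖ :=
        (abs_norm_sub_norm_le _ _).trans hA
      have h2 : |‖f v‖ - ‖f t‖| ≤ ∫ r in t..v, ‖fd r‖ :=
        (abs_norm_sub_norm_le _ _).trans hB
      rw [abs_le] at h1 h2 ⊢
      constructor <;> nlinarith [h1.1, h1.2, h2.1, h2.2]
    have hconst : (‖f u‖ + ‖f v‖) / (2 * N)
        = ∫ _ in u..v, ((‖f u‖ + ‖f v‖) / 2) := by
      rw [intervalIntegral.integral_const, smul_eq_mul, hlenj]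
      ring
    rw [hconst, ← intervalIntegral.integral_sub (hfc.norm.intervalIntegrable _ _)
      (intervalIntegrable_const)]
    calc |∫ t in u..v, (‖f t‖ - (‖f u‖ + ‖f v‖) / 2)|
        ≤ ∫ t in u..v, |‖f t‖ - (‖f u‖ + ‖f v‖) / 2| :=
          intervalIntegral.abs_integral_le_integral_abs huv
      _ ≤ ∫ _ in u..v, (D / 2) := by
          apply intervalIntegral.integral_mono_on huv
          · exact ((hfc.norm.sub continuous_const).abs).intervalIntegrable _ _
          · exact intervalIntegrable_const
          · exact hpt
      _ = (1 / (2 * N)) * D := by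
          rw [intervalIntegral.integral_const, smul_eq_mul, hlenj]
          ring
  -- assemble
  rw [hsplitf, htrap, ← Finset.sum_sub_distrib]
  calc |∑ j ∈ range N, ((∫ t in a j..a (j + 1), ‖f t‖)
          - (‖f (a j)‖ + ‖f (a (j + 1))‖) / (2 * N))|
      ≤ ∑ j ∈ range N, |(∫ t in a j..a (j + 1), ‖f t‖)
          - (‖f (a j)‖ + ‖f (a (j + 1))‖) / (2 * N)| := Finset.abs_sum_le_sum_abs _ _
    _ ≤ ∑ j ∈ range N, (1 / (2 * N)) * ∫ t in a j..a (j + 1), ‖fd t‖ :=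
          Finset.sum_le_sum hkey
    _ = (1 / (2 * N)) * ∫ t in (0:ℝ)..1, ‖fd t‖ := by
          rw [← Finset.mul_sum, hsplitfd]


theorem stmt_15 (N : ℕ) (hN : 0 < N) (d : ℕ) (c : ℤ → ℂ) (f : ℝ → ℂ)
    (hf : ∀ t : ℝ, f t = ∑ k ∈ Finset.Icc (-(d : ℤ)) d,
        c k * Complex.exp (2 * π * Complex.I * (k : ℂ) * t)) :
    |(∫ t in (0 : ℝ)..1, ‖f t‖)
        - (1 / N) * ∑ j ∈ Finset.range N, ‖f (j / N)‖|
      ≤ (2 * π * d / N) * ∫ t in (0 : ℝ)..1, ‖f t‖ := by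
  have hf' : ∀ t : ℝ, f t = ∑ k ∈ Finset.Icc (-(d:ℤ)) d, c k * ee k t := by
    intro t
    rw [hf t]
    rfl
  set fd : ℝ → ℂ := fun t => ∑ k ∈ Finset.Icc (-(d:ℤ)) d,
    c k * (2 * (π:ℂ) * Complex.I * k * ee k t) with hfddef
  have hder : ∀ t : ℝ, HasDerivAt f (fd t) t := by
    intro t
    have hfe : f = fun t => ∑ k ∈ Finset.Icc (-(d:ℤ)) d, c k * ee k t := funext hf'
    rw [hfe, hfddef]
    apply HasDerivAt.fun_sum
    intro k _
    exact (ee_hasDeriv k t).const_mul (c k)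
  have hfc : Continuous f := by
    rw [funext hf']
    exact continuous_finset_sum _ fun k _ => continuous_const.mul (ee_cont _)
  have hfdc : Continuous fd := by
    rw [hfddef]
    exact continuous_finset_sum _ fun k _ =>
      continuous_const.mul (continuous_const.mul (ee_cont _))
  have hper : f 1 = f 0 := by
    have h0 : f (0 + 1) = f 0 := by
      rw [hf' (0 + 1), hf' 0]
      exact Finset.sum_congr rfl fun k _ => by rw [ee_periodic]
    simpa using h0
  have hq := quadrature N hN f fd hder hfc hfdc hper
  have hb := myBernstein d c f fd hf' (fun t => rfl)
  have hN' : (0:ℝ) < N := by exact_mod_cast hN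
  calc |(∫ t in (0 : ℝ)..1, ‖f t‖) - (1 / N) * ∑ j ∈ Finset.range N, ‖f (j / N)‖|
      ≤ (1 / (2 * N)) * ∫ t in (0:ℝ)..1, ‖fd t‖ := hq
    _ ≤ (1 / (2 * N)) * (4 * π * d * ∫ t in (0:ℝ)..1, ‖f t‖) := by
        apply mul_le_mul_of_nonneg_left hb (by positivity)
    _ = (2 * π * d / N) * ∫ t in (0 : ℝ)..1, ‖f t‖ := by
        field_simp
        ring
end

section
/- Let $2 \le M < N$ be integers and define the sequence $K_{M,N}(k) = \frac{1}{M}\sum_{|n| \le M-1,\ |n-k| \le N+M} (1 - |n|/M)$ (the normalized convolution of the indicator of $\{-N-M,\ldots,N+M\}$ with the Fejér coefficients $\mathbb{f}_{M-1}$). Then $K_{M,N}(k) = 1$ for $|k| \le N$, $K_{M,N}(k) = 0$ for $|k| \ge N + 2M$, and $\int_0^1 \left|\sum_{k} K_{M,N}(k) e^{2i\pi k t}\right| dt \le 8\left(2 + \ln(1 + N/M)\right)$. -/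
open Real MeasureTheory Finset

lemma sum_abs_Icc (c : ℕ) : ∑ n ∈ Finset.Icc (-(c:ℤ)) c, (|(n:ℝ)|) = c * (c + 1) := by
  induction c with
  | zero => simp
  | succ c ih =>
    have h1 : Finset.Icc (-((c:ℤ)+1)) ((c:ℤ)+1)
        = insert (-((c:ℤ)+1)) (insert ((c:ℤ)+1) (Finset.Icc (-(c:ℤ)) c)) := by
      ext n; simp [Finset.mem_Icc]; omega
    have h2 : (-((c:ℤ)+1)) ∉ insert ((c:ℤ)+1) (Finset.Icc (-(c:ℤ)) (c:ℤ)) := by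
      simp [Finset.mem_Icc]; omega
    have h3 : ((c:ℤ)+1) ∉ Finset.Icc (-(c:ℤ)) (c:ℤ) := by simp [Finset.mem_Icc]
    push_cast
    rw [h1, Finset.sum_insert h2, Finset.sum_insert h3]
    push_cast at ih
    rw [ih]
    have hc0 : (0:ℝ) ≤ (c:ℝ) + 1 := by positivity
    rw [abs_of_nonpos (by push_cast; linarith), abs_of_nonneg (by push_cast; linarith)]
    push_cast
    ring

lemma fejer_mass (M : ℕ) (hM : 1 ≤ M) :
    ∑ n ∈ Finset.Icc (-(M : ℤ) + 1) ((M : ℤ) - 1), (1 - |(n : ℝ)| / M) = M := by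
  have he : Finset.Icc (-(M : ℤ) + 1) ((M : ℤ) - 1) = Finset.Icc (-((M-1:ℕ):ℤ)) ((M-1:ℕ):ℤ) := by
    congr 1 <;> push_cast [Nat.cast_sub hM] <;> ring
  have hcard : (Finset.Icc (-((M-1:ℕ):ℤ)) ((M-1:ℕ):ℤ)).card = 2 * M - 1 := by
    rw [Int.card_Icc]; omega
  have hM0 : (0:ℝ) < (M:ℝ) := by positivity
  rw [he, Finset.sum_sub_distrib, Finset.sum_const, hcard]
  have h4 : ∑ n ∈ Finset.Icc (-((M-1:ℕ):ℤ)) ((M-1:ℕ):ℤ), (|(n:ℝ)| / M)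
      = ((M:ℝ)-1) * M / M := by
    rw [← Finset.sum_div, sum_abs_Icc (M-1)]
    push_cast [Nat.cast_sub hM]; ring
  rw [h4]
  field_simp
  push_cast [Nat.cast_sub (by omega : 1 ≤ 2*M)]
  rw [nsmul_eq_mul, mul_one, Nat.cast_sub (by omega : 1 ≤ 2*M)]
  push_cast
  ring

lemma geom_Icc (z : ℂ) (hz : z ≠ 0) (a b : ℤ) (hab : a ≤ b) :
    (z - 1) * ∑ j ∈ Finset.Icc a b, z ^ j = z ^ (b + 1) - z ^ a := by
  set n : ℕ := (b + 1 - a).toNat with hn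
  have hmap : Finset.Icc a b = (Finset.range n).map
      (⟨fun i : ℕ => a + (i : ℤ), show Function.Injective (fun i : ℕ => a + (i : ℤ)) from by intro i j h; simpa using h⟩ : ℕ ↪ ℤ) := by
    ext k
    simp only [Finset.mem_Icc, Finset.mem_map, Finset.mem_range, Function.Embedding.coeFn_mk]
    constructor
    · rintro ⟨h1, h2⟩; exact ⟨(k - a).toNat, by omega, by omega⟩
    · rintro ⟨i, hi, rfl⟩; omega
  rw [hmap, Finset.sum_map]
  simp only [Function.Embedding.coeFn_mk]
  have hzp : ∀ i : ℕ, z ^ (a + (i:ℤ)) = z ^ a * z ^ i := by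
    intro i; rw [zpow_add₀ hz, zpow_natCast]
  simp only [hzp, ← Finset.mul_sum]
  rw [mul_comm (z-1), mul_assoc, geom_sum_mul]
  rw [mul_sub, ← zpow_natCast z n, ← zpow_add₀ hz, mul_one]
  congr 2
  omega

lemma norm_zpow_one (z : ℂ) (hz1 : ‖z‖ = 1) (j : ℤ) : ‖z ^ j‖ = 1 := by
  rw [norm_zpow, hz1, one_zpow]

lemma norm_geom_Icc (z : ℂ) (hz1 : ‖z‖ = 1) (hz : z ≠ 1) (a b : ℤ) (hab : a ≤ b) :
    ‖∑ j ∈ Finset.Icc a b, z ^ j‖ ≤ 2 / ‖z - 1‖ := by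
  have hz0 : z ≠ 0 := by intro h; rw [h] at hz1; simp at hz1
  have hs : (0:ℝ) < ‖z - 1‖ := by
    rw [norm_pos_iff]; exact sub_ne_zero.mpr hz
  rw [le_div_iff₀ hs]
  calc ‖∑ j ∈ Finset.Icc a b, z ^ j‖ * ‖z - 1‖
      = ‖(z - 1) * ∑ j ∈ Finset.Icc a b, z ^ j‖ := by rw [norm_mul, mul_comm]
    _ = ‖z ^ (b+1) - z ^ a‖ := by rw [geom_Icc z hz0 a b hab]
    _ ≤ ‖z ^ (b+1)‖ + ‖z ^ a‖ := norm_sub_le _ _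
    _ ≤ 2 := by rw [norm_zpow_one z hz1, norm_zpow_one z hz1]; norm_num
lemma T_swap (z : ℂ) (M : ℕ) (hM : 1 ≤ M) :
    ∑ n ∈ Finset.Icc (-(M:ℤ)+1) ((M:ℤ)-1), (((M:ℝ) - |(n:ℝ)| : ℝ) : ℂ) * z ^ n
      = ∑ m ∈ Finset.range M, ∑ j ∈ Finset.Icc (-(m:ℤ)) (m:ℤ), z ^ j := by
  have h1 : ∀ m ∈ Finset.range M, ∑ j ∈ Finset.Icc (-(m:ℤ)) (m:ℤ), z^j
      = ∑ n ∈ Finset.Icc (-(M:ℤ)+1) ((M:ℤ)-1), if n.natAbs ≤ m then z^n else 0 := by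
    intro m hm
    rw [Finset.mem_range] at hm
    rw [← Finset.sum_filter]
    apply Finset.sum_congr _ (fun _ _ => rfl)
    ext k; simp only [Finset.mem_filter, Finset.mem_Icc]
    omega
  rw [Finset.sum_congr rfl h1, Finset.sum_comm]
  apply Finset.sum_congr rfl
  intro n hn
  rw [← Finset.sum_filter, Finset.sum_const]
  have h2 : Finset.filter (fun m => n.natAbs ≤ m) (Finset.range M) = Finset.Ico n.natAbs M := by
    ext m; simp only [Finset.mem_filter, Finset.mem_range, Finset.mem_Ico]; tauto
  rw [h2, Nat.card_Ico, nsmul_eq_mul]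
  rw [Finset.mem_Icc] at hn
  congr 1
  have h3 : ((M:ℝ) - |(n:ℝ)|) = ((M - n.natAbs : ℕ) : ℝ) := by
    rw [Nat.cast_sub (by omega), Nat.cast_natAbs]
    push_cast
    ring
  rw [h3]
  norm_cast

lemma T_bound (z : ℂ) (hz1 : ‖z‖ = 1) (hz : z ≠ 1) (M : ℕ) (hM : 1 ≤ M) :
    ‖∑ n ∈ Finset.Icc (-(M:ℤ)+1) ((M:ℤ)-1), (((M:ℝ) - |(n:ℝ)| : ℝ) : ℂ) * z ^ n‖
      ≤ 4 / ‖z - 1‖ ^ 2 := by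
  have hz0 : z ≠ 0 := by intro h; rw [h] at hz1; simp at hz1
  set T := ∑ n ∈ Finset.Icc (-(M:ℤ)+1) ((M:ℤ)-1), (((M:ℝ) - |(n:ℝ)| : ℝ) : ℂ) * z ^ n with hT
  have hs : (0:ℝ) < ‖z - 1‖ := by rw [norm_pos_iff]; exact sub_ne_zero.mpr hz
  have key : (z - 1) * ((z - 1) * T) = (z ^ ((M:ℤ)+1) - z) + (z ^ (1-(M:ℤ)) - z) := by
    rw [hT, T_swap z M hM, Finset.mul_sum]
    have h1 : ∀ m ∈ Finset.range M, (z-1) * ∑ j ∈ Finset.Icc (-(m:ℤ)) (m:ℤ), z ^ j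
        = z ^ ((m:ℤ)+1) - z ^ (-(m:ℤ)) := by
      intro m _; exact geom_Icc z hz0 _ _ (by omega)
    rw [Finset.sum_congr rfl h1, Finset.mul_sum]
    have h2 : ∀ m ∈ Finset.range M, (z-1) * (z ^ ((m:ℤ)+1) - z ^ (-(m:ℤ)))
        = (z ^ (((m+1:ℕ):ℤ)+1) - z ^ ((m:ℤ)+1)) + (z ^ (1-((m+1:ℕ):ℤ)) - z ^ (1-(m:ℤ))) := by
      intro m _
      have e1 : z ^ (((m+1:ℕ):ℤ)+1) = z ^ ((m:ℤ)+1) * z := by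
        push_cast
        rw [← zpow_add_one₀ hz0]
      have e2 : z ^ (1-(m:ℤ)) = z ^ (-(m:ℤ)) * z := by
        rw [← zpow_add_one₀ hz0]; congr 1; ring
      have e3 : z ^ (1-((m+1:ℕ):ℤ)) = z ^ (-(m:ℤ)) := by
        push_cast
        congr 1
        ring
      rw [e1, e2, e3]; ring
    rw [Finset.sum_congr rfl h2, Finset.sum_add_distrib]
    have s1 := Finset.sum_range_sub (fun m : ℕ => z ^ ((m:ℤ)+1)) M
    have s2 := Finset.sum_range_sub (fun m : ℕ => z ^ (1-(m:ℤ))) M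
    rw [s1, s2]
    norm_num
  have hnorm : ‖z-1‖^2 * ‖T‖ ≤ 4 := by
    have : ‖(z - 1) * ((z - 1) * T)‖ = ‖z-1‖^2 * ‖T‖ := by
      rw [norm_mul, norm_mul]; ring
    rw [← this, key]
    have b1 : ‖z ^ ((M:ℤ)+1) - z‖ ≤ 2 := by
      refine (norm_sub_le _ _).trans ?_
      rw [norm_zpow, hz1, one_zpow]; norm_num
    have b2 : ‖z ^ (1-(M:ℤ)) - z‖ ≤ 2 := by
      refine (norm_sub_le _ _).trans ?_
      rw [norm_zpow, hz1, one_zpow]; norm_num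
    calc ‖(z ^ ((M:ℤ)+1) - z) + (z ^ (1-(M:ℤ)) - z)‖
        ≤ ‖z ^ ((M:ℤ)+1) - z‖ + ‖z ^ (1-(M:ℤ)) - z‖ := norm_add_le _ _
      _ ≤ 4 := by linarith
  rw [le_div_iff₀ (by positivity)]
  calc ‖T‖ * ‖z-1‖^2 = ‖z-1‖^2 * ‖T‖ := by ring
    _ ≤ 4 := hnorm

lemma norm_exp_two_pi_sub_one (x : ℝ) :
    ‖Complex.exp (2*(π:ℂ)*Complex.I*x) - 1‖ = 2*|Real.sin (π*x)| := by
  have e1 : Complex.exp (2*(π:ℂ)*Complex.I*x)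
      = Complex.exp (((π*x:ℝ):ℂ) * Complex.I) * Complex.exp (((π*x:ℝ):ℂ) * Complex.I) := by
    rw [← Complex.exp_add]; push_cast; ring_nf
  have e2 : Complex.exp (((π*x:ℝ):ℂ) * Complex.I) * Complex.exp (((-(π*x):ℝ):ℂ) * Complex.I)
      = 1 := by
    rw [← Complex.exp_add]; push_cast; ring_nf; exact Complex.exp_zero
  have e3 : Complex.exp (2*(π:ℂ)*Complex.I*x) - 1
      = Complex.exp (((π*x:ℝ):ℂ) * Complex.I)
        * (Complex.exp (((π*x:ℝ):ℂ) * Complex.I) - Complex.exp (((-(π*x):ℝ):ℂ) * Complex.I)) := by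
    rw [mul_sub, ← e1, e2]
  have e4 : Complex.exp (((π*x:ℝ):ℂ) * Complex.I) - Complex.exp (((-(π*x):ℝ):ℂ) * Complex.I)
      = 2 * Complex.sin ((π*x:ℝ):ℂ) * Complex.I := by
    rw [Complex.exp_mul_I, Complex.exp_mul_I, Complex.ofReal_neg, Complex.cos_neg,
      Complex.sin_neg]
    ring
  rw [e3, e4, norm_mul, Complex.norm_exp_ofReal_mul_I, one_mul, norm_mul, norm_mul,
    Complex.norm_I, mul_one, ← Complex.ofReal_sin, Complex.norm_real]
  norm_num

lemma norm_z_one (t : ℝ) : ‖Complex.exp (2*(π:ℂ)*Complex.I*(t:ℂ))‖ = 1 := by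
  rw [Complex.norm_exp]
  have : (2*(π:ℂ)*Complex.I*(t:ℂ)).re = 0 := by simp
  rw [this, Real.exp_zero]

lemma z_sub_one_pos (t : ℝ) (h0 : 0 < t) (h1 : t < 1) :
    0 < ‖Complex.exp (2*(π:ℂ)*Complex.I*(t:ℂ)) - 1‖ := by
  rw [norm_exp_two_pi_sub_one]
  have : 0 < Real.sin (π*t) :=
    Real.sin_pos_of_pos_of_lt_pi (by positivity) (by nlinarith [Real.pi_pos])
  rw [abs_of_pos this]; linarith

lemma z_ne_one (t : ℝ) (h0 : 0 < t) (h1 : t < 1) :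
    Complex.exp (2*(π:ℂ)*Complex.I*(t:ℂ)) ≠ 1 := by
  intro h
  have := z_sub_one_pos t h0 h1
  rw [h] at this; simp at this

lemma z_sub_one_lb (t : ℝ) (h0 : 0 ≤ t) (h1 : t ≤ 1/2) :
    4 * t ≤ ‖Complex.exp (2*(π:ℂ)*Complex.I*(t:ℂ)) - 1‖ := by
  rw [norm_exp_two_pi_sub_one]
  have hpi := Real.pi_pos
  have hsin : 2 / π * (π * t) ≤ Real.sin (π * t) :=
    Real.mul_le_sin (by positivity) (by nlinarith)
  have h2 : 2 / π * (π * t) = 2 * t := by field_simp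
  have h3 : 2 * t ≤ Real.sin (π*t) := by linarith [h2 ▸ hsin]
  have h4 : 0 ≤ Real.sin (π*t) := by linarith
  rw [abs_of_nonneg h4]; linarith

lemma fact_lemma (M N : ℕ) (hM : 2 ≤ M) (hMN : M < N) (K : ℤ → ℝ)
    (hK : ∀ k : ℤ, K k = (1 / M) *
        ∑ n ∈ Finset.Icc (-(M : ℤ) + 1) ((M : ℤ) - 1),
          (if |n - k| ≤ (N : ℤ) + M then 1 - |(n : ℝ)| / M else 0)) (t : ℝ) :
    ∑ k ∈ Finset.Icc (-((N : ℤ) + 2 * M)) ((N : ℤ) + 2 * M),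
        (K k : ℂ) * Complex.exp (2 * π * Complex.I * (k : ℂ) * t)
    = (M:ℂ)⁻¹ *
      ((∑ n ∈ Finset.Icc (-(M : ℤ) + 1) ((M : ℤ) - 1),
          ((1 - |(n : ℝ)| / M : ℝ) : ℂ) * Complex.exp (2*(π:ℂ)*Complex.I*(t:ℂ)) ^ n)
        * (∑ j ∈ Finset.Icc (-((N:ℤ)+M)) ((N:ℤ)+M),
            Complex.exp (2*(π:ℂ)*Complex.I*(t:ℂ)) ^ j)) := by
  set w : ℂ := Complex.exp (2*(π:ℂ)*Complex.I*(t:ℂ)) with hw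
  have hw0 : w ≠ 0 := Complex.exp_ne_zero _
  have hzexp : ∀ k : ℤ, Complex.exp (2 * π * Complex.I * (k : ℂ) * t) = w ^ k := by
    intro k
    rw [hw, ← Complex.exp_int_mul]
    congr 1
    push_cast
    ring
  calc ∑ k ∈ Finset.Icc (-((N : ℤ) + 2 * M)) ((N : ℤ) + 2 * M),
        (K k : ℂ) * Complex.exp (2 * π * Complex.I * (k : ℂ) * t)
      = (M:ℂ)⁻¹ * ∑ k ∈ Finset.Icc (-((N : ℤ) + 2 * M)) ((N : ℤ) + 2 * M),
          ∑ n ∈ Finset.Icc (-(M : ℤ) + 1) ((M : ℤ) - 1),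
            (if |n - k| ≤ (N : ℤ) + M then ((1 - |(n : ℝ)| / M : ℝ) : ℂ) * w ^ k else 0) := by
        rw [Finset.mul_sum]
        apply Finset.sum_congr rfl
        intro k _
        rw [hK k, hzexp k]
        push_cast [apply_ite (fun x : ℝ => (x : ℂ))]
        rw [one_div, mul_assoc, Finset.sum_mul]
        congr 1
        apply Finset.sum_congr rfl
        intro n _
        rw [ite_mul, zero_mul]
    _ = (M:ℂ)⁻¹ * ∑ n ∈ Finset.Icc (-(M : ℤ) + 1) ((M : ℤ) - 1),
          ((1 - |(n : ℝ)| / M : ℝ) : ℂ) *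
            (w ^ n * ∑ j ∈ Finset.Icc (-((N:ℤ)+M)) ((N:ℤ)+M), w ^ j) := by
        congr 1
        rw [Finset.sum_comm]
        apply Finset.sum_congr rfl
        intro n hn
        rw [Finset.mem_Icc] at hn
        rw [← Finset.sum_filter]
        have hfil : Finset.filter (fun k => |n - k| ≤ (N : ℤ) + M)
            (Finset.Icc (-((N : ℤ) + 2 * M)) ((N : ℤ) + 2 * M)) = Finset.Icc (n-((N:ℤ)+M)) (n+((N:ℤ)+M)) := by
          ext k; simp only [Finset.mem_filter, Finset.mem_Icc, abs_le]; omega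
        rw [hfil]
        have hmap : Finset.Icc (n-((N:ℤ)+M)) (n+((N:ℤ)+M))
            = (Finset.Icc (-((N:ℤ)+M)) ((N:ℤ)+M)).map
              ⟨fun j => n + j, show Function.Injective (fun j : ℤ => n + j) from by intro a b h; simpa using h⟩ := by
          ext k
          simp only [Finset.mem_Icc, Finset.mem_map, Function.Embedding.coeFn_mk]
          constructor
          · rintro ⟨h1, h2⟩; exact ⟨k - n, by omega, by ring⟩
          · rintro ⟨j, hj, rfl⟩; omega
        rw [hmap, Finset.sum_map]
        simp only [Function.Embedding.coeFn_mk]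
        rw [Finset.mul_sum, Finset.mul_sum]
        apply Finset.sum_congr rfl
        intro j _
        rw [zpow_add₀ hw0]
    _ = (M:ℂ)⁻¹ *
        ((∑ n ∈ Finset.Icc (-(M : ℤ) + 1) ((M : ℤ) - 1), ((1 - |(n : ℝ)| / M : ℝ) : ℂ) * w ^ n)
          * (∑ j ∈ Finset.Icc (-((N:ℤ)+M)) ((N:ℤ)+M), w ^ j)) := by
        congr 1
        rw [Finset.sum_mul]
        apply Finset.sum_congr rfl
        intro n _
        rw [mul_assoc]

lemma part3 (M N : ℕ) (hM : 2 ≤ M) (hMN : M < N) (K : ℤ → ℝ)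
    (hK : ∀ k : ℤ, K k = (1 / M) *
        ∑ n ∈ Finset.Icc (-(M : ℤ) + 1) ((M : ℤ) - 1),
          (if |n - k| ≤ (N : ℤ) + M then 1 - |(n : ℝ)| / M else 0)) :
    (∫ t in (0 : ℝ)..1,
        ‖∑ k ∈ Finset.Icc (-((N : ℤ) + 2 * M)) ((N : ℤ) + 2 * M),
            (K k : ℂ) * Complex.exp (2 * π * Complex.I * (k : ℂ) * t)‖)
      ≤ 8 * (2 + Real.log (1 + (N : ℝ) / M)) := by
  have hM0 : (0:ℝ) < (M:ℝ) := by positivity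
  set φ : ℝ → ℝ := fun t => ‖∑ k ∈ Finset.Icc (-((N : ℤ) + 2 * M)) ((N : ℤ) + 2 * M),
      (K k : ℂ) * Complex.exp (2 * π * Complex.I * (k : ℂ) * t)‖ with hφ
  have hcont : Continuous fun t : ℝ => ∑ k ∈ Finset.Icc (-((N : ℤ) + 2 * M)) ((N : ℤ) + 2 * M),
      (K k : ℂ) * Complex.exp (2 * π * Complex.I * (k : ℂ) * t) := by
    apply continuous_finset_sum
    intro k _
    exact continuous_const.mul (Complex.continuous_exp.comp
      (continuous_const.mul Complex.continuous_ofReal))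
  have hφc : Continuous φ := hcont.norm
  have hint : ∀ a b : ℝ, IntervalIntegrable φ volume a b := fun a b =>
    hφc.intervalIntegrable a b
  have hφeq : ∀ t : ℝ, φ t = (M:ℝ)⁻¹ *
      (‖∑ n ∈ Finset.Icc (-(M : ℤ) + 1) ((M : ℤ) - 1),
          ((1 - |(n : ℝ)| / M : ℝ) : ℂ) * Complex.exp (2*(π:ℂ)*Complex.I*(t:ℂ)) ^ n‖
        * ‖∑ j ∈ Finset.Icc (-((N:ℤ)+M)) ((N:ℤ)+M),
            Complex.exp (2*(π:ℂ)*Complex.I*(t:ℂ)) ^ j‖) := by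
    intro t
    rw [hφ]
    simp only
    rw [fact_lemma M N hM hMN K hK t, norm_mul, norm_mul, norm_inv]
    norm_num
  have hFle : ∀ t : ℝ, ‖∑ n ∈ Finset.Icc (-(M : ℤ) + 1) ((M : ℤ) - 1),
      ((1 - |(n : ℝ)| / M : ℝ) : ℂ) * Complex.exp (2*(π:ℂ)*Complex.I*(t:ℂ)) ^ n‖ ≤ M := by
    intro t
    refine (norm_sum_le _ _).trans ?_
    have h1 : ∀ n ∈ Finset.Icc (-(M : ℤ) + 1) ((M : ℤ) - 1),
        ‖((1 - |(n : ℝ)| / M : ℝ) : ℂ) * Complex.exp (2*(π:ℂ)*Complex.I*(t:ℂ)) ^ n‖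
          = 1 - |(n : ℝ)| / M := by
      intro n hn
      rw [Finset.mem_Icc] at hn
      rw [norm_mul, norm_zpow, norm_z_one, one_zpow, mul_one, Complex.norm_real]
      apply abs_of_nonneg
      have h2 : |(n:ℝ)| ≤ (M:ℝ) := by
        rw [abs_le]
        constructor
        · exact_mod_cast le_trans (by omega : -(M:ℤ) ≤ -(M:ℤ)+1) hn.1
        · exact_mod_cast le_trans hn.2 (by omega : (M:ℤ)-1 ≤ M)
      have h3 : |(n:ℝ)| / M ≤ 1 := by rw [div_le_one hM0]; exact h2
      linarith
    rw [Finset.sum_congr rfl h1, fejer_mass M (by omega)]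
  have hDle : ∀ t : ℝ, ‖∑ j ∈ Finset.Icc (-((N:ℤ)+M)) ((N:ℤ)+M),
      Complex.exp (2*(π:ℂ)*Complex.I*(t:ℂ)) ^ j‖ ≤ 2*(N:ℝ)+2*M+1 := by
    intro t
    refine (norm_sum_le _ _).trans ?_
    have h1 : ∀ j ∈ Finset.Icc (-((N:ℤ)+M)) ((N:ℤ)+M),
        ‖Complex.exp (2*(π:ℂ)*Complex.I*(t:ℂ)) ^ j‖ = 1 := by
      intro j _
      rw [norm_zpow, norm_z_one, one_zpow]
    rw [Finset.sum_congr rfl h1, Finset.sum_const, nsmul_eq_mul, mul_one]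
    have h2 : (Finset.Icc (-((N:ℤ)+M)) ((N:ℤ)+M)).card = 2*N+2*M+1 := by
      rw [Int.card_Icc]; omega
    rw [h2]
    push_cast
    linarith
  have bA : ∀ t : ℝ, φ t ≤ 2*(N:ℝ)+2*M+1 := by
    intro t
    rw [hφeq t]
    calc (M:ℝ)⁻¹ * (‖∑ n ∈ Finset.Icc (-(M : ℤ) + 1) ((M : ℤ) - 1),
          ((1 - |(n : ℝ)| / M : ℝ) : ℂ) * Complex.exp (2*(π:ℂ)*Complex.I*(t:ℂ)) ^ n‖
        * ‖∑ j ∈ Finset.Icc (-((N:ℤ)+M)) ((N:ℤ)+M),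
            Complex.exp (2*(π:ℂ)*Complex.I*(t:ℂ)) ^ j‖)
        ≤ (M:ℝ)⁻¹ * ((M:ℝ) * (2*(N:ℝ)+2*M+1)) := by
          apply mul_le_mul_of_nonneg_left ?_ (by positivity)
          exact mul_le_mul (hFle t) (hDle t) (norm_nonneg _) hM0.le
      _ = 2*(N:ℝ)+2*M+1 := by field_simp
  have key_b : ∀ t : ℝ, 0 < t → t ≤ 1/2 → φ t ≤ (1/2) * t⁻¹ := by
    intro t h0 h1
    have hzne := z_ne_one t h0 (by linarith)
    have hs := z_sub_one_pos t h0 (by linarith)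
    have hsl := z_sub_one_lb t h0.le h1
    have hD2 := norm_geom_Icc _ (norm_z_one t) hzne (-((N:ℤ)+M)) ((N:ℤ)+M) (by omega)
    rw [hφeq t]
    set s := ‖Complex.exp (2*(π:ℂ)*Complex.I*(t:ℂ)) - 1‖ with hsdef
    calc (M:ℝ)⁻¹ * (‖∑ n ∈ Finset.Icc (-(M : ℤ) + 1) ((M : ℤ) - 1),
          ((1 - |(n : ℝ)| / M : ℝ) : ℂ) * Complex.exp (2*(π:ℂ)*Complex.I*(t:ℂ)) ^ n‖
        * ‖∑ j ∈ Finset.Icc (-((N:ℤ)+M)) ((N:ℤ)+M),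
            Complex.exp (2*(π:ℂ)*Complex.I*(t:ℂ)) ^ j‖)
        ≤ (M:ℝ)⁻¹ * ((M:ℝ) * (2/s)) := by
          apply mul_le_mul_of_nonneg_left ?_ (by positivity)
          exact mul_le_mul (hFle t) hD2 (norm_nonneg _) hM0.le
      _ = 2/s := by field_simp
      _ ≤ 2/(4*t) := by
          apply div_le_div_of_nonneg_left (by norm_num) (by linarith) hsl
      _ = (1/2) * t⁻¹ := by field_simp; ring
  have key_c : ∀ t : ℝ, 0 < t → t ≤ 1/2 → φ t ≤ (1/(8*(M:ℝ)^2)) * t^(-3:ℤ) := by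
    intro t h0 h1
    have hzne := z_ne_one t h0 (by linarith)
    have hs := z_sub_one_pos t h0 (by linarith)
    have hsl := z_sub_one_lb t h0.le h1
    have hD2 := norm_geom_Icc _ (norm_z_one t) hzne (-((N:ℤ)+M)) ((N:ℤ)+M) (by omega)
    have hT := T_bound _ (norm_z_one t) hzne M (by omega)
    have hFT : ∑ n ∈ Finset.Icc (-(M : ℤ) + 1) ((M : ℤ) - 1),
        ((1 - |(n : ℝ)| / M : ℝ) : ℂ) * Complex.exp (2*(π:ℂ)*Complex.I*(t:ℂ)) ^ n
        = (M:ℂ)⁻¹ * ∑ n ∈ Finset.Icc (-(M:ℤ)+1) ((M:ℤ)-1),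
            (((M:ℝ) - |(n:ℝ)| : ℝ) : ℂ) * Complex.exp (2*(π:ℂ)*Complex.I*(t:ℂ)) ^ n := by
      rw [Finset.mul_sum]
      apply Finset.sum_congr rfl
      intro n _
      rw [← mul_assoc]
      congr 1
      have e : (1 - |(n:ℝ)|/M : ℝ) = ((M:ℝ)⁻¹ * ((M:ℝ) - |(n:ℝ)|) : ℝ) := by field_simp
      rw [e]
      push_cast
      ring
    have hF2 : ‖∑ n ∈ Finset.Icc (-(M : ℤ) + 1) ((M : ℤ) - 1),
        ((1 - |(n : ℝ)| / M : ℝ) : ℂ) * Complex.exp (2*(π:ℂ)*Complex.I*(t:ℂ)) ^ n‖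
        ≤ (M:ℝ)⁻¹ * (4/‖Complex.exp (2*(π:ℂ)*Complex.I*(t:ℂ)) - 1‖^2) := by
      rw [hFT, norm_mul, norm_inv]
      have : ‖((M:ℕ):ℂ)‖ = (M:ℝ) := by
        rw [Complex.norm_natCast]
      rw [this]
      exact mul_le_mul_of_nonneg_left hT (by positivity)
    rw [hφeq t]
    set s := ‖Complex.exp (2*(π:ℂ)*Complex.I*(t:ℂ)) - 1‖ with hsdef
    have h4t : (0:ℝ) < 4*t := by linarith
    calc (M:ℝ)⁻¹ * (‖∑ n ∈ Finset.Icc (-(M : ℤ) + 1) ((M : ℤ) - 1),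
          ((1 - |(n : ℝ)| / M : ℝ) : ℂ) * Complex.exp (2*(π:ℂ)*Complex.I*(t:ℂ)) ^ n‖
        * ‖∑ j ∈ Finset.Icc (-((N:ℤ)+M)) ((N:ℤ)+M),
            Complex.exp (2*(π:ℂ)*Complex.I*(t:ℂ)) ^ j‖)
        ≤ (M:ℝ)⁻¹ * (((M:ℝ)⁻¹ * (4/s^2)) * (2/s)) := by
          apply mul_le_mul_of_nonneg_left ?_ (by positivity)
          exact mul_le_mul hF2 hD2 (norm_nonneg _) (by positivity)
      _ = 8 / ((M:ℝ)^2 * s^3) := by field_simp; ring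
      _ ≤ 8 / ((M:ℝ)^2 * (4*t)^3) := by
          apply div_le_div_of_nonneg_left (by norm_num) (by positivity) ?_
          apply mul_le_mul_of_nonneg_left ?_ (by positivity)
          exact pow_le_pow_left₀ h4t.le hsl 3
      _ = (1/(8*(M:ℝ)^2)) * t^(-3:ℤ) := by
          have ht3 : t^(-3:ℤ) = (t^3)⁻¹ := by
            rw [zpow_neg, show ((3:ℤ)) = ((3:ℕ):ℤ) from rfl, zpow_natCast]
          rw [ht3]
          field_simp
          ring
  have hsym : ∀ x : ℝ, φ (1-x) = φ x := by
    intro x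
    rw [hφ]
    simp only
    have hterm : ∀ k : ℤ, (K k : ℂ) * Complex.exp (2*π*Complex.I*(k:ℂ)*((1-x:ℝ):ℂ))
        = (starRingEnd ℂ) ((K k : ℂ) * Complex.exp (2*π*Complex.I*(k:ℂ)*(x:ℂ))) := by
      intro k
      rw [map_mul, Complex.conj_ofReal]
      congr 1
      rw [← Complex.exp_conj]
      have h1 : (starRingEnd ℂ) (2*(π:ℂ)*Complex.I*(k:ℂ)*(x:ℂ))
          = -(2*(π:ℂ)*Complex.I*(k:ℂ)*(x:ℂ)) := by
        simp only [map_mul, Complex.conj_I, Complex.conj_ofReal, map_ofNat, map_intCast]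
        ring
      rw [h1, show (2*(π:ℂ)*Complex.I*(k:ℂ)*((1-x:ℝ):ℂ))
          = (k:ℂ)*(2*(π:ℂ)*Complex.I) + -(2*(π:ℂ)*Complex.I*(k:ℂ)*(x:ℂ)) by push_cast; ring,
        Complex.exp_add, Complex.exp_int_mul_two_pi_mul_I, one_mul]
    rw [show ∑ k ∈ Finset.Icc (-((N : ℤ) + 2 * M)) ((N : ℤ) + 2 * M),
        (K k : ℂ) * Complex.exp (2 * π * Complex.I * (k : ℂ) * ((1-x:ℝ):ℂ))
        = (starRingEnd ℂ) (∑ k ∈ Finset.Icc (-((N : ℤ) + 2 * M)) ((N : ℤ) + 2 * M),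
            (K k : ℂ) * Complex.exp (2 * π * Complex.I * (k : ℂ) * (x:ℂ)))
      from by rw [map_sum]; exact Finset.sum_congr rfl (fun k _ => hterm k)]
    exact RCLike.norm_conj _
  set a : ℝ := 1/(2*((N:ℝ)+(M:ℝ))) with ha
  set b : ℝ := 1/(2*(M:ℝ)) with hb
  have hNM0 : (0:ℝ) < (N:ℝ)+(M:ℝ) := by positivity
  have hM2 : (2:ℝ) ≤ (M:ℝ) := by exact_mod_cast hM
  have ha0 : 0 < a := by positivity
  have hb0 : 0 < b := by positivity
  have hab : a ≤ b := by
    rw [ha, hb]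
    apply one_div_le_one_div_of_le (by positivity)
    have : (0:ℝ) ≤ (N:ℝ) := by positivity
    linarith
  have hb12 : b ≤ 1/2 := by
    rw [hb]
    apply one_div_le_one_div_of_le (by norm_num)
    linarith
  have I1 : ∫ t in (0:ℝ)..a, φ t ≤ 2 := by
    have hmono := intervalIntegral.integral_mono_on ha0.le (hint 0 a)
      intervalIntegrable_const (fun x _ => bA x)
    rw [intervalIntegral.integral_const, smul_eq_mul, sub_zero] at hmono
    refine hmono.trans ?_
    rw [ha]
    calc 1/(2*((N:ℝ)+M)) * (2*(N:ℝ)+2*M+1)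
        ≤ 1/(2*((N:ℝ)+M)) * (4*((N:ℝ)+M)) := by
          apply mul_le_mul_of_nonneg_left (by linarith) (by positivity)
      _ = 2 := by field_simp; ring
  have hcont2 : ContinuousOn (fun x:ℝ => (1/2) * x⁻¹) (Set.uIcc a b) := by
    apply ContinuousOn.mul continuousOn_const
    apply ContinuousOn.inv₀ continuousOn_id
    intro x hx
    rw [Set.uIcc_of_le hab] at hx
    exact ne_of_gt (lt_of_lt_of_le ha0 hx.1)
  have I2 : ∫ t in a..b, φ t ≤ (1/2) * Real.log (1 + (N:ℝ)/M) := by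
    have hmono := intervalIntegral.integral_mono_on hab (hint a b)
      hcont2.intervalIntegrable
      (fun x hx => key_b x (lt_of_lt_of_le ha0 hx.1) (le_trans hx.2 hb12))
    refine hmono.trans ?_
    rw [intervalIntegral.integral_const_mul, integral_inv ?hmem]
    case hmem =>
      rw [Set.uIcc_of_le hab]
      simp only [Set.mem_Icc, not_and]
      intro h; linarith
    have hba : b / a = 1 + (N:ℝ)/M := by rw [ha, hb]; field_simp; ring
    rw [hba]
  have hcont3 : ContinuousOn (fun x:ℝ => (1/(8*(M:ℝ)^2)) * x^(-3:ℤ)) (Set.uIcc b (1/2)) := by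
    apply ContinuousOn.mul continuousOn_const
    apply ContinuousOn.zpow₀ continuousOn_id
    intro x hx
    left
    rw [Set.uIcc_of_le hb12] at hx
    exact ne_of_gt (lt_of_lt_of_le hb0 hx.1)
  have hmem3 : (0:ℝ) ∉ Set.uIcc b (1/2:ℝ) := by
    rw [Set.uIcc_of_le hb12]
    simp only [Set.mem_Icc, not_and]
    intro h; linarith
  have I3 : ∫ t in b..(1/2:ℝ), φ t ≤ 1/4 := by
    have hmono := intervalIntegral.integral_mono_on hb12 (hint b (1/2))
      hcont3.intervalIntegrable
      (fun x hx => key_c x (lt_of_lt_of_le hb0 hx.1) hx.2)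
    refine hmono.trans ?_
    rw [intervalIntegral.integral_const_mul, integral_zpow (Or.inr ⟨by norm_num, hmem3⟩)]
    have e1 : ((1:ℝ)/2) ^ ((-3:ℤ)+1) = 4 := by norm_num
    have e2 : b ^ ((-3:ℤ)+1) = 4*(M:ℝ)^2 := by
      rw [hb]
      rw [show ((-3:ℤ)+1) = -2 by norm_num]
      rw [zpow_neg, show ((2:ℤ)) = ((2:ℕ):ℤ) from rfl, zpow_natCast]
      rw [div_pow, one_pow, inv_div]
      norm_num
      ring
    rw [e1, e2]
    push_cast
    have hval : ((4:ℝ) - 4*(M:ℝ)^2) / (-3+1) = 2*(M:ℝ)^2 - 2 := by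
      rw [div_eq_iff (by norm_num : ((-3:ℝ)+1) ≠ 0)]; ring
    rw [hval, one_div, inv_mul_le_iff₀ (by positivity : (0:ℝ) < 8*(M:ℝ)^2)]
    nlinarith [sq_nonneg ((M:ℝ))]
  have hflip : ∫ t in (1/2:ℝ)..1, φ t = ∫ t in (0:ℝ)..(1/2:ℝ), φ t := by
    have h := intervalIntegral.integral_comp_sub_left (a := (1/2:ℝ)) (b := (1:ℝ)) φ 1
    simp only [hsym] at h
    rw [h]
    norm_num
  have e1 := intervalIntegral.integral_add_adjacent_intervals (hint 0 a) (hint a b)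
  have e2 := intervalIntegral.integral_add_adjacent_intervals (hint 0 b) (hint b (1/2))
  have e3 := intervalIntegral.integral_add_adjacent_intervals (hint 0 (1/2)) (hint (1/2) 1)
  have hlog : 0 ≤ Real.log (1 + (N:ℝ)/M) := Real.log_nonneg (by
    have : (0:ℝ) ≤ (N:ℝ)/M := by positivity
    linarith)
  calc ∫ t in (0:ℝ)..1, φ t = (∫ t in (0:ℝ)..(1/2:ℝ), φ t) + ∫ t in (1/2:ℝ)..1, φ t := e3.symm
    _ = 2 * ∫ t in (0:ℝ)..(1/2:ℝ), φ t := by rw [hflip]; ring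
    _ = 2 * ((∫ t in (0:ℝ)..a, φ t) + (∫ t in a..b, φ t) + (∫ t in b..(1/2:ℝ), φ t)) := by
        rw [← e2, ← e1]
    _ ≤ 2 * (2 + (1/2) * Real.log (1 + (N:ℝ)/M) + 1/4) := by linarith
    _ ≤ 8 * (2 + Real.log (1 + (N:ℝ)/M)) := by linarith

theorem stmt_16 (M N : ℕ) (hM : 2 ≤ M) (hMN : M < N) (K : ℤ → ℝ)
    (hK : ∀ k : ℤ, K k = (1 / M) *
        ∑ n ∈ Finset.Icc (-(M : ℤ) + 1) ((M : ℤ) - 1),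
          (if |n - k| ≤ (N : ℤ) + M then 1 - |(n : ℝ)| / M else 0)) :
    (∀ k : ℤ, |k| ≤ (N : ℤ) → K k = 1) ∧
    (∀ k : ℤ, (N : ℤ) + 2 * M ≤ |k| → K k = 0) ∧
    (∫ t in (0 : ℝ)..1,
        ‖∑ k ∈ Finset.Icc (-((N : ℤ) + 2 * M)) ((N : ℤ) + 2 * M),
            (K k : ℂ) * Complex.exp (2 * π * Complex.I * (k : ℂ) * t)‖)
      ≤ 8 * (2 + Real.log (1 + (N : ℝ) / M)) := by
  have hM0 : (0:ℝ) < (M:ℝ) := by positivity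
  refine ⟨?_, ?_, part3 M N hM hMN K hK⟩
  · intro k hk
    rw [hK k]
    have h1 : ∀ n ∈ Finset.Icc (-(M : ℤ) + 1) ((M : ℤ) - 1),
        (if |n - k| ≤ (N : ℤ) + M then 1 - |(n : ℝ)| / M else 0) = 1 - |(n : ℝ)| / M := by
      intro n hn
      rw [Finset.mem_Icc] at hn
      rw [if_pos]
      rw [abs_le] at hk ⊢
      omega
    rw [Finset.sum_congr rfl h1, fejer_mass M (by omega)]
    field_simp
  · intro k hk
    rw [hK k]
    have h1 : ∀ n ∈ Finset.Icc (-(M : ℤ) + 1) ((M : ℤ) - 1),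
        (if |n - k| ≤ (N : ℤ) + M then 1 - |(n : ℝ)| / M else 0) = 0 := by
      intro n hn
      rw [Finset.mem_Icc] at hn
      rw [if_neg]
      intro hc
      rw [abs_le] at hc
      rcases abs_cases k with ⟨h2, h3⟩ | ⟨h2, h3⟩ <;> omega
    rw [Finset.sum_congr rfl h1]
    simp
end

section
/- Let $N \ge 1$, $\omega = e^{i\pi/(N+1)}$, $a_j = \omega^{j^2}$, and $P(t) = \sum_{j=0}^N a_j e^{2i\pi j t}$. Then $\int_0^1 |P(t)|^4\,dt = N^2 + O(N^{3/2})$ as $N \to \infty$; more precisely there is an absolute constant $A$ with $\left|\int_0^1 |P(t)|^4 dt - (N+1)^2\right| \le A N^{3/2}$ for all $N \ge 1$. -/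
open Real MeasureTheory Finset

noncomputable section
namespace S17

def a (n j : ℕ) : ℂ := Complex.exp (π * Complex.I * (j:ℂ)^2 / n)
def e (m : ℤ) (t : ℝ) : ℂ := Complex.exp (2 * π * Complex.I * m * t)
def P (n : ℕ) (t : ℝ) : ℂ := ∑ j ∈ range n, a n j * e j t
def c (n : ℕ) (ℓ : ℤ) : ℂ :=
  ∑ j ∈ range n, ∑ k ∈ range n,
    if (j:ℤ) - k = ℓ then a n j * (starRingEnd ℂ) (a n k) else 0

lemma orth (m : ℤ) : (∫ t in (0:ℝ)..1, e m t) = if m = 0 then 1 else 0 := by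
  rcases eq_or_ne m 0 with h | h
  · simp [e, h]
  · have hc : (2 * (π:ℂ) * Complex.I * m) ≠ 0 := by
      simp [Complex.ext_iff, Real.pi_ne_zero, h]
    have : (∫ t in (0:ℝ)..1, Complex.exp ((2 * (π:ℂ) * Complex.I * m) * t)) =
        (Complex.exp ((2 * (π:ℂ) * Complex.I * m) * 1) -
          Complex.exp ((2 * (π:ℂ) * Complex.I * m) * 0)) / (2 * (π:ℂ) * Complex.I * m) :=
      integral_exp_mul_complex hc
    simp only [e]
    rw [this]
    have h1 : Complex.exp (2 * (π:ℂ) * Complex.I * m) = 1 := by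
      rw [show 2 * (π:ℂ) * Complex.I * m = (m:ℤ) * (2 * π * Complex.I) by push_cast; ring]
      exact Complex.exp_int_mul_two_pi_mul_I m
    simp only [mul_one, mul_zero, Complex.exp_zero, h1, sub_self, zero_div, if_neg h]

lemma e_mul (m m' : ℤ) (t : ℝ) : e m t * e m' t = e (m + m') t := by
  simp [e, ← Complex.exp_add]; push_cast; ring

lemma conj_e (m : ℤ) (t : ℝ) : (starRingEnd ℂ) (e m t) = e (-m) t := by
  rw [e, e, ← Complex.exp_conj]
  congr 1
  simp only [map_mul, Complex.conj_I, Complex.conj_ofReal, map_ofNat, map_intCast]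
  push_cast
  ring


lemma decomp (n : ℕ) (t : ℝ) :
    P n t * (starRingEnd ℂ) (P n t) =
      ∑ ℓ ∈ Finset.Icc (1 - (n:ℤ)) ((n:ℤ) - 1), c n ℓ * e ℓ t := by
  have hL : P n t * (starRingEnd ℂ) (P n t) =
      ∑ j ∈ range n, ∑ k ∈ range n,
        (a n j * (starRingEnd ℂ) (a n k)) * e ((j:ℤ) - k) t := by
    rw [P, map_sum, Finset.sum_mul_sum]
    refine Finset.sum_congr rfl fun j hj => Finset.sum_congr rfl fun k hk => ?_
    rw [map_mul, conj_e]
    rw [show ((j:ℤ) - k) = (j:ℤ) + (-(k:ℤ)) by ring, ← e_mul]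
    ring
  have hR : ∑ ℓ ∈ Finset.Icc (1 - (n:ℤ)) ((n:ℤ) - 1), c n ℓ * e ℓ t =
      ∑ j ∈ range n, ∑ k ∈ range n,
        (a n j * (starRingEnd ℂ) (a n k)) * e ((j:ℤ) - k) t := by
    simp only [c, Finset.sum_mul, ite_mul, zero_mul]
    rw [Finset.sum_comm]
    refine Finset.sum_congr rfl fun j hj => ?_
    rw [Finset.sum_comm]
    refine Finset.sum_congr rfl fun k hk => ?_
    rw [Finset.sum_ite_eq (Finset.Icc (1 - (n:ℤ)) ((n:ℤ) - 1)) ((j:ℤ) - k)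
      (fun ℓ => a n j * (starRingEnd ℂ) (a n k) * e ℓ t)]
    have hj' := Finset.mem_range.1 hj
    have hk' := Finset.mem_range.1 hk
    rw [if_pos]
    simp only [Finset.mem_Icc]
    omega
  rw [hL, hR]


lemma cont_e (m : ℤ) : Continuous (e m) := by
  unfold e; fun_prop

lemma int4 (n : ℕ) :
    (∫ t in (0:ℝ)..1, ‖P n t‖^4) =
      ∑ ℓ ∈ Finset.Icc (1 - (n:ℤ)) ((n:ℤ) - 1), ‖c n ℓ‖^2 := by
  set S := Finset.Icc (1 - (n:ℤ)) ((n:ℤ) - 1) with hS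
  have key : ∀ t : ℝ, ‖P n t‖^4 =
      ∑ ℓ ∈ S, ∑ ℓ' ∈ S, ((c n ℓ * (starRingEnd ℂ) (c n ℓ')) * e (ℓ - ℓ') t).re := by
    intro t
    have h1 : ((P n t * (starRingEnd ℂ) (P n t)) *
        (starRingEnd ℂ) (P n t * (starRingEnd ℂ) (P n t))).re = ‖P n t‖^4 := by
      rw [Complex.mul_conj, Complex.normSq_eq_norm_sq]
      simp only [← Complex.ofReal_pow, Complex.ofReal_re, map_mul, Complex.conj_ofReal,
        ← Complex.ofReal_mul, RCLike.norm_conj]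
      simp only [norm_mul, RCLike.norm_conj]; ring
    rw [← h1, decomp, map_sum, Finset.sum_mul_sum]
    simp only [Complex.re_sum]
    refine Finset.sum_congr rfl fun ℓ _ => Finset.sum_congr rfl fun ℓ' _ => ?_
    congr 1
    rw [map_mul, conj_e, show (ℓ:ℤ) - ℓ' = ℓ + (-ℓ') by ring, ← e_mul]
    ring
  simp only [key]
  rw [intervalIntegral.integral_finset_sum]
  · refine Finset.sum_congr rfl fun ℓ hℓ => ?_
    rw [intervalIntegral.integral_finset_sum]
    · have inner : ∀ ℓ' ∈ S, (∫ t in (0:ℝ)..1,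
          ((c n ℓ * (starRingEnd ℂ) (c n ℓ')) * e (ℓ - ℓ') t).re)
          = if ℓ = ℓ' then ‖c n ℓ‖^2 else 0 := by
        intro ℓ' _
        have hi : IntervalIntegrable (fun t : ℝ => (c n ℓ * (starRingEnd ℂ) (c n ℓ')) * e (ℓ - ℓ') t)
            volume 0 1 := ((continuous_const.mul (cont_e _)).intervalIntegrable _ _)
        have h3 : (∫ t in (0:ℝ)..1, ((c n ℓ * (starRingEnd ℂ) (c n ℓ')) * e (ℓ - ℓ') t).re)
            = ((c n ℓ * (starRingEnd ℂ) (c n ℓ')) * ∫ t in (0:ℝ)..1, e (ℓ - ℓ') t).re := by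
          rw [← intervalIntegral.integral_const_mul]
          simpa using Complex.reCLM.intervalIntegral_comp_comm hi
        rw [h3, orth]
        rcases eq_or_ne ℓ ℓ' with h | h
        · simp only [h, sub_self, if_pos rfl, mul_one, Complex.mul_conj]
          simp [Complex.normSq_eq_norm_sq, ← Complex.ofReal_pow]
        · rw [if_neg (by omega), if_neg h, mul_zero, Complex.zero_re]
      rw [Finset.sum_congr rfl inner, Finset.sum_ite_eq S ℓ (fun _ => ‖c n ℓ‖^2), if_pos hℓ]
    · intro ℓ' _
      exact (Complex.continuous_re.comp (continuous_const.mul (cont_e _))).intervalIntegrable _ _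
  · intro ℓ _
    refine (continuous_finset_sum _ fun ℓ' _ => ?_).intervalIntegrable _ _
    exact Complex.continuous_re.comp (continuous_const.mul (cont_e _))


lemma a_eq (n j : ℕ) : a n j = Complex.exp ((π * j^2 / n : ℝ) * Complex.I) := by
  rw [a]; congr 1; push_cast; ring

lemma a_mul_conj (n j k : ℕ) (hn : n ≠ 0) :
    a n j * (starRingEnd ℂ) (a n k)
      = Complex.exp (((π * j^2 / n - π * k^2 / n : ℝ)) * Complex.I) := by
  rw [a_eq, a_eq, ← Complex.exp_conj, ← Complex.exp_add]
  congr 1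
  simp only [map_mul, Complex.conj_I, Complex.conj_ofReal]
  push_cast
  ring

lemma norm_exp_sub_one_sq (θ : ℝ) :
    ‖Complex.exp ((θ:ℝ) * Complex.I) - 1‖^2 = 4 * Real.sin (θ/2)^2 := by
  rw [Complex.exp_mul_I, ← Complex.ofReal_cos, ← Complex.ofReal_sin]
  have : (Real.cos θ : ℂ) + (Real.sin θ : ℂ) * Complex.I - 1
      = ((Real.cos θ - 1 : ℝ) : ℂ) + ((Real.sin θ : ℝ) : ℂ) * Complex.I := by
    push_cast; ring
  rw [this, Complex.sq_norm, Complex.normSq_add_mul_I]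
  have h1 := Real.sin_sq_add_cos_sq θ
  have h2 := Real.sin_sq_add_cos_sq (θ/2)
  have h3 : Real.cos θ = 2 * Real.cos (θ/2)^2 - 1 := by
    have := Real.cos_two_mul (θ/2)
    rw [show 2*(θ/2) = θ by ring] at this
    linarith
  nlinarith [h1, h2, h3]

lemma c_zero (n : ℕ) : c n 0 = n := by
  rw [c]
  have : ∀ j k : ℕ, ((j:ℤ) - k = 0) = (j = k) := by
    intro j k; rw [eq_iff_iff]; omega
  simp only [this]
  rw [Finset.sum_congr rfl fun j hj => ?_]
  · rw [Finset.sum_const, card_range, nsmul_eq_mul, mul_one]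
  · rw [Finset.sum_ite_eq (range n) j (fun k => a n j * (starRingEnd ℂ) (a n k)), if_pos hj,
      Complex.mul_conj]
    rw [a_eq, Complex.normSq_eq_norm_sq, Complex.norm_exp_ofReal_mul_I]
    norm_num

lemma c_pos (n ℓ : ℕ) (h1 : 1 ≤ ℓ) (h2 : ℓ ≤ n - 1) (hn : 2 ≤ n) :
    ‖c n (ℓ:ℤ)‖^2 = Real.sin (π * ℓ^2 / n)^2 / Real.sin (π * ℓ / n)^2 := by
  have hn0 : (n:ℝ) ≠ 0 := by positivity
  set z : ℂ := Complex.exp ((2*π*ℓ/n : ℝ) * Complex.I) with hz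
  have hgeom : c n (ℓ:ℤ) = Complex.exp ((π * ℓ^2 / n : ℝ) * Complex.I) *
      ∑ k ∈ range (n - ℓ), z^k := by
    rw [c]
    have hcond : ∀ j k : ℕ, ((j:ℤ) - k = (ℓ:ℤ)) = (j = k + ℓ) := by
      intro j k; rw [eq_iff_iff]; omega
    simp only [hcond]
    rw [Finset.sum_comm]
    rw [Finset.sum_congr rfl fun k hk =>
      Finset.sum_ite_eq' (range n) (k + ℓ) (fun j => a n j * (starRingEnd ℂ) (a n k))]
    rw [← Finset.sum_filter]
    have hset : (range n).filter (fun k => k + ℓ ∈ range n) = range (n - ℓ) := by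
      ext k; simp only [Finset.mem_filter, Finset.mem_range]; omega
    rw [hset, Finset.mul_sum]
    refine Finset.sum_congr rfl fun k hk => ?_
    rw [a_mul_conj _ _ _ (by omega), ← Complex.exp_nat_mul, ← Complex.exp_add]
    congr 1
    push_cast
    rw [show ((π:ℂ) * (↑k+↑ℓ)^2 / n - π * k^2/n : ℂ) =
      (π * ℓ^2/n : ℂ) + k * ((2*π*ℓ/n : ℂ)) by field_simp; ring]
    ring
  have hz1 : z ≠ 1 := by
    rw [hz, Ne, Complex.exp_eq_one_iff]
    rintro ⟨m, hm⟩
    have hr : (2*π*(ℓ:ℝ)/n) = (m:ℝ) * (2*π) := by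
      have := congrArg Complex.im hm
      simpa using this
    have hπ : (0:ℝ) < π := Real.pi_pos
    have hℓn : (ℓ:ℝ) = (m:ℝ) * n := by
      have h2 : 2*π*(ℓ:ℝ) = 2*π*((m:ℝ)*n) := by
        field_simp at hr
        nlinarith [hr]
      have := mul_left_cancel₀ (by positivity : (2*π:ℝ) ≠ 0) h2
      linarith
    have hz2 : (ℓ:ℤ) = m * n := by exact_mod_cast hℓn
    have hm1 : 1 ≤ m := by
      by_contra hc
      push_neg at hc
      nlinarith [hz2, (by exact_mod_cast h1 : (1:ℤ) ≤ (ℓ:ℤ)),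
        (by exact_mod_cast hn : (2:ℤ) ≤ (n:ℤ))]
    nlinarith [hz2, hm1, (by exact_mod_cast hn : (2:ℤ) ≤ (n:ℤ)),
      (by omega : (ℓ:ℤ) ≤ (n:ℤ) - 1)]
  have hsum : ∑ k ∈ range (n - ℓ), z^k = (z^(n-ℓ) - 1)/(z - 1) := geom_sum_eq hz1 _
  have hzpow : z^(n-ℓ) = Complex.exp ((2*π*ℓ*(n-ℓ)/n : ℝ) * Complex.I) := by
    rw [hz, ← Complex.exp_nat_mul]
    congr 1
    push_cast [Nat.cast_sub (by omega : ℓ ≤ n)]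
    ring
  rw [hgeom, hsum, hzpow]
  rw [norm_mul, norm_div, mul_pow, div_pow]
  rw [show ‖Complex.exp ((π * ℓ^2 / n : ℝ) * Complex.I)‖ = 1 from Complex.norm_exp_ofReal_mul_I _]
  rw [one_pow, one_mul, hz, norm_exp_sub_one_sq, norm_exp_sub_one_sq]
  have e1 : (2*π*(ℓ:ℝ)*((n:ℝ)-ℓ)/n)/2 = (ℓ:ℝ)*π - π*ℓ^2/n := by field_simp
  have e2 : (2*π*(ℓ:ℝ)/n)/2 = π*ℓ/n := by ring
  rw [e1, e2]
  have e3 : Real.sin ((ℓ:ℝ)*π - π*ℓ^2/n)^2 = Real.sin (π*ℓ^2/n)^2 := by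
    rw [show ((ℓ:ℝ)*π) = ((ℓ:ℤ):ℝ)*π by push_cast; ring, Real.sin_int_mul_pi_sub]
    rw [neg_sq, mul_pow]
    have hone : ((-1:ℝ)^(ℓ:ℤ))^2 = 1 := by
      rcases Int.even_or_odd (ℓ:ℤ) with h|h
      · rw [h.neg_one_zpow]; norm_num
      · rw [Odd.neg_one_zpow h]; norm_num
    rw [hone, one_mul]
  rw [e3]
  ring

def F (n s : ℕ) : ℝ := min ((n:ℝ)^2/(4*(s:ℝ)^2)) (π^2*(s:ℝ)^2/4)

lemma F_nonneg (n s : ℕ) : 0 ≤ F n s := le_min (by positivity) (by positivity)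

lemma quot_bound (n s : ℕ) (hs : 1 ≤ s) (h2 : 2*s ≤ n) :
    Real.sin (π * s^2 / n)^2 / Real.sin (π * s / n)^2 ≤ F n s := by
  have hπ := Real.pi_pos
  have hn0 : (0:ℝ) < n := by
    have : 2 ≤ n := by omega
    exact_mod_cast by omega
  have hs0 : (0:ℝ) < s := by exact_mod_cast hs
  have harg0 : 0 ≤ π * s / n := by positivity
  have harg2 : π * s / n ≤ π / 2 := by
    rw [div_le_div_iff₀ hn0 (by norm_num : (0:ℝ) < 2)]
    have : (2:ℝ)*s ≤ n := by exact_mod_cast h2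
    nlinarith
  have hden : 2*(s:ℝ)/n ≤ Real.sin (π * s / n) := by
    have := Real.mul_le_sin harg0 harg2
    calc 2*(s:ℝ)/n = 2/π * (π * s/n) := by field_simp
    _ ≤ _ := this
  have hdenpos : (0:ℝ) < 2*s/n := by positivity
  have hden2 : (2*(s:ℝ)/n)^2 ≤ Real.sin (π * s / n)^2 := by
    apply sq_le_sq' <;> nlinarith
  have hdenpos2 : (0:ℝ) < Real.sin (π * s / n)^2 := by nlinarith
  apply le_min
  · calc Real.sin (π * s^2 / n)^2 / Real.sin (π * s / n)^2
        ≤ 1 / ((2*(s:ℝ)/n)^2) :=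
          div_le_div₀ (by norm_num) (Real.sin_sq_le_one _) (by positivity) hden2
    _ = (n:ℝ)^2/(4*(s:ℝ)^2) := by field_simp; ring
  · calc Real.sin (π * s^2 / n)^2 / Real.sin (π * s / n)^2
        ≤ (π * s^2 / n)^2 / ((2*(s:ℝ)/n)^2) :=
          div_le_div₀ (by positivity) Real.sin_sq_le_sq (by positivity) hden2
    _ = π^2*(s:ℝ)^2/4 := by field_simp; ring

lemma sum_F_bound (n : ℕ) (hn : 2 ≤ n) :
    ∑ s ∈ Finset.Ioc 0 (n-1), F n s ≤ (π^2/4 + 1/2) * ((n:ℝ) * Real.sqrt n) := by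
  have hπ := Real.pi_pos
  have hn0 : (0:ℝ) < n := by exact_mod_cast by omega
  have hsqn : Real.sqrt n * Real.sqrt n = n := Real.mul_self_sqrt hn0.le
  have hsqpos : (0:ℝ) < Real.sqrt n := Real.sqrt_pos.2 hn0
  set M := Nat.sqrt n with hM
  have hM1 : 1 ≤ M := by
    have := Nat.sqrt_pos.2 (by omega : 0 < n)
    omega
  have hMn : M ≤ n - 1 := by
    have := Nat.sqrt_lt_self (by omega : 1 < n)
    omega
  have hM2n : (M:ℝ)^2 ≤ n := by
    exact_mod_cast Nat.sqrt_le' n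
  have hMle : (M:ℝ) ≤ Real.sqrt n := by
    calc (M:ℝ) = Real.sqrt ((M:ℝ)^2) := (Real.sqrt_sq (by positivity)).symm
    _ ≤ Real.sqrt n := Real.sqrt_le_sqrt hM2n
  have hMge : Real.sqrt n ≤ 2*M := by
    have h : (n:ℝ) < ((M:ℝ)+1)^2 := by
      have := Nat.lt_succ_sqrt' n
      rw [show ((M:ℝ)+1)^2 = ((((M+1)^2:ℕ)):ℝ) by push_cast; ring]
      exact_mod_cast this
    have h2 : Real.sqrt n ≤ (M:ℝ)+1 := by
      calc Real.sqrt n ≤ Real.sqrt (((M:ℝ)+1)^2) := Real.sqrt_le_sqrt h.le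
      _ = (M:ℝ)+1 := Real.sqrt_sq (by positivity)
    have hM1' : (1:ℝ) ≤ M := by exact_mod_cast hM1
    linarith
  rw [← Finset.sum_Ioc_consecutive _ (Nat.zero_le M) hMn]
  have part1 : ∑ s ∈ Finset.Ioc 0 M, F n s ≤ π^2/4 * ((n:ℝ) * Real.sqrt n) := by
    have hb : ∀ s ∈ Finset.Ioc 0 M, F n s ≤ π^2*(M:ℝ)^2/4 := by
      intro s hs
      rw [Finset.mem_Ioc] at hs
      refine (min_le_right _ _).trans ?_
      have hsM : (s:ℝ) ≤ M := by exact_mod_cast hs.2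
      have hs0 : (0:ℝ) ≤ s := by positivity
      have hsq : (s:ℝ)^2 ≤ (M:ℝ)^2 := by nlinarith
      nlinarith [mul_le_mul_of_nonneg_left hsq (sq_nonneg π)]
    calc ∑ s ∈ Finset.Ioc 0 M, F n s ≤ (Finset.Ioc 0 M).card • (π^2*(M:ℝ)^2/4) :=
          Finset.sum_le_card_nsmul _ _ _ hb
    _ = (M:ℝ) * (π^2*(M:ℝ)^2/4) := by
          rw [Nat.card_Ioc, nsmul_eq_mul]; norm_num
    _ ≤ π^2/4 * ((n:ℝ) * Real.sqrt n) := by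
          have key : (M:ℝ)*(M:ℝ)^2 ≤ Real.sqrt n * n :=
            mul_le_mul hMle hM2n (by positivity) hsqpos.le
          calc (M:ℝ) * (π^2*(M:ℝ)^2/4) = π^2/4 * ((M:ℝ)*(M:ℝ)^2) := by ring
          _ ≤ π^2/4 * (Real.sqrt n * n) := by
                exact mul_le_mul_of_nonneg_left key (by positivity)
          _ = π^2/4 * ((n:ℝ) * Real.sqrt n) := by ring
  have part2 : ∑ s ∈ Finset.Ioc M (n-1), F n s ≤ 1/2 * ((n:ℝ) * Real.sqrt n) := by
    have hb : ∀ s ∈ Finset.Ioc M (n-1), F n s ≤ (n:ℝ)^2/4 * ((s:ℝ)^2)⁻¹ := by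
      intro s hs
      refine (min_le_left _ _).trans ?_
      rw [div_eq_mul_inv, mul_inv]
      ring_nf
      exact le_rfl
    calc ∑ s ∈ Finset.Ioc M (n-1), F n s
        ≤ ∑ s ∈ Finset.Ioc M (n-1), (n:ℝ)^2/4 * ((s:ℝ)^2)⁻¹ := Finset.sum_le_sum hb
    _ = (n:ℝ)^2/4 * ∑ s ∈ Finset.Ioc M (n-1), ((s:ℝ)^2)⁻¹ := by rw [Finset.mul_sum]
    _ ≤ (n:ℝ)^2/4 * ((M:ℝ)⁻¹ - ((n-1:ℕ):ℝ)⁻¹) := by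
          apply mul_le_mul_of_nonneg_left _ (by positivity)
          exact sum_Ioc_inv_sq_le_sub (by omega) hMn
    _ ≤ (n:ℝ)^2/4 * (M:ℝ)⁻¹ := by
          apply mul_le_mul_of_nonneg_left _ (by positivity)
          have : (0:ℝ) ≤ ((n-1:ℕ):ℝ)⁻¹ := by positivity
          linarith
    _ ≤ 1/2 * ((n:ℝ) * Real.sqrt n) := by
          have hMpos : (0:ℝ) < M := by exact_mod_cast hM1
          have hinv : (M:ℝ)⁻¹ ≤ 2 / Real.sqrt n := by
            rw [inv_eq_one_div, div_le_div_iff₀ hMpos hsqpos]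
            linarith [hMge]
          calc (n:ℝ)^2/4 * (M:ℝ)⁻¹ ≤ (n:ℝ)^2/4 * (2/Real.sqrt n) :=
                mul_le_mul_of_nonneg_left hinv (by positivity)
          _ = 1/2 * ((n:ℝ) * Real.sqrt n) := by
                field_simp
                nlinarith [hsqn]
  linarith


lemma c_neg (n : ℕ) (ℓ : ℤ) : ‖c n (-ℓ)‖ = ‖c n ℓ‖ := by
  have h : c n (-ℓ) = (starRingEnd ℂ) (c n ℓ) := by
    rw [c, c, map_sum, Finset.sum_comm]
    refine Finset.sum_congr rfl fun k _ => ?_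
    rw [map_sum]
    refine Finset.sum_congr rfl fun j _ => ?_
    rw [apply_ite (starRingEnd ℂ), map_zero, map_mul, Complex.conj_conj]
    refine if_congr (by omega) (by ring) rfl
  rw [h, RCLike.norm_conj]

lemma neg_one_zpow_sq (m : ℤ) : ((-1:ℝ)^m)^2 = 1 := by
  rcases Int.even_or_odd m with h|h
  · rw [h.neg_one_zpow]; norm_num
  · rw [Odd.neg_one_zpow h]; norm_num

lemma c_le (n ℓ : ℕ) (h1 : 1 ≤ ℓ) (h2 : ℓ ≤ n-1) (hn : 2 ≤ n) :
    ‖c n (ℓ:ℤ)‖^2 ≤ F n ℓ + F n (n-ℓ) := by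
  rw [c_pos n ℓ h1 h2 hn]
  have hn0 : (0:ℝ) < n := by exact_mod_cast by omega
  by_cases hc : 2*ℓ ≤ n
  · exact le_add_of_le_of_nonneg (quot_bound n ℓ h1 hc) (F_nonneg _ _)
  · push_neg at hc
    set s := n - ℓ with hs
    have hs1 : 1 ≤ s := by omega
    have hs2 : 2*s ≤ n := by omega
    have hcast : (ℓ:ℝ) = (n:ℝ) - s := by
      rw [hs]; push_cast [Nat.cast_sub (by omega : ℓ ≤ n)]; ring
    have hden : Real.sin (π*ℓ/n) = Real.sin (π*s/n) := by
      rw [show π*(ℓ:ℝ)/n = π - π*s/n by rw [hcast]; field_simp, Real.sin_pi_sub]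
    have hnum : Real.sin (π*(ℓ:ℝ)^2/n)^2 = Real.sin (π*(s:ℝ)^2/n)^2 := by
      have harg : π*(ℓ:ℝ)^2/n = π*(s:ℝ)^2/n + (((n:ℤ) - 2*s : ℤ):ℝ)*π := by
        rw [hcast]; push_cast; field_simp; ring
      rw [harg, Real.sin_add_int_mul_pi, mul_pow, neg_one_zpow_sq, one_mul]
    rw [hden, hnum]
    exact le_add_of_nonneg_of_le (F_nonneg _ _) (quot_bound n s hs1 hs2)

lemma c_zero_norm (n : ℕ) (h : c n 0 = n) : ‖c n 0‖^2 = (n:ℝ)^2 := by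
  rw [h]
  simp [Complex.norm_natCast]


lemma err_bound (n : ℕ) (hn : 2 ≤ n) :
    ∑ ℓ ∈ (Finset.Icc (1 - (n:ℤ)) ((n:ℤ) - 1)).erase 0, ‖c n ℓ‖^2
      ≤ (π^2 + 2) * ((n:ℝ) * Real.sqrt n) := by
  have hsplit : (Finset.Icc (1 - (n:ℤ)) ((n:ℤ) - 1)).erase 0
      = Finset.Icc (1-(n:ℤ)) (-1) ∪ Finset.Icc 1 ((n:ℤ)-1) := by
    ext x
    simp only [Finset.mem_erase, Finset.mem_Icc, Finset.mem_union]
    omega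
  have hdisj : Disjoint (Finset.Icc (1-(n:ℤ)) (-1)) (Finset.Icc 1 ((n:ℤ)-1)) := by
    rw [Finset.disjoint_left]
    intro x hx hx'
    simp only [Finset.mem_Icc] at hx hx'
    omega
  rw [hsplit, Finset.sum_union hdisj]
  have hneg : ∑ ℓ ∈ Finset.Icc (1-(n:ℤ)) (-1), ‖c n ℓ‖^2
      = ∑ ℓ ∈ Finset.Icc (1:ℤ) ((n:ℤ)-1), ‖c n ℓ‖^2 := by
    refine Finset.sum_nbij' (i := fun ℓ => -ℓ) (j := fun ℓ => -ℓ) ?_ ?_ ?_ ?_ ?_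
    · intro x hx; simp only [Finset.mem_Icc] at hx ⊢; omega
    · intro x hx; simp only [Finset.mem_Icc] at hx ⊢; omega
    · intro x _; ring
    · intro x _; ring
    · intro x _; rw [show x = -(-x) by ring, c_neg, neg_neg]
  rw [hneg]
  have hnat : ∑ ℓ ∈ Finset.Icc (1:ℤ) ((n:ℤ)-1), ‖c n ℓ‖^2
      = ∑ ℓ ∈ Finset.Icc 1 (n-1), ‖c n (ℓ:ℤ)‖^2 := by
    refine Finset.sum_nbij' (i := fun ℓ : ℤ => ℓ.toNat) (j := fun ℓ : ℕ => (ℓ:ℤ)) ?_ ?_ ?_ ?_ ?_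
    · intro x hx; simp only [Finset.mem_Icc] at hx ⊢; omega
    · intro x hx; simp only [Finset.mem_Icc] at hx ⊢; omega
    · intro x hx; simp only [Finset.mem_Icc] at hx; omega
    · intro x hx; simp only [Finset.mem_Icc] at hx; omega
    · intro x hx
      simp only [Finset.mem_Icc] at hx
      rw [Int.toNat_of_nonneg (by omega)]
  rw [hnat, ← two_mul]
  have hstep : ∑ ℓ ∈ Finset.Icc 1 (n-1), ‖c n (ℓ:ℤ)‖^2
      ≤ ∑ ℓ ∈ Finset.Icc 1 (n-1), (F n ℓ + F n (n-ℓ)) := by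
    refine Finset.sum_le_sum fun ℓ hℓ => ?_
    simp only [Finset.mem_Icc] at hℓ
    exact c_le n ℓ hℓ.1 hℓ.2 hn
  have hflip : ∑ ℓ ∈ Finset.Icc 1 (n-1), F n (n-ℓ) = ∑ ℓ ∈ Finset.Icc 1 (n-1), F n ℓ := by
    refine Finset.sum_nbij' (i := fun ℓ : ℕ => n - ℓ) (j := fun ℓ : ℕ => n - ℓ) ?_ ?_ ?_ ?_ ?_
    · intro x hx; simp only [Finset.mem_Icc] at hx ⊢; omega
    · intro x hx; simp only [Finset.mem_Icc] at hx ⊢; omega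
    · intro x hx; simp only [Finset.mem_Icc] at hx; omega
    · intro x hx; simp only [Finset.mem_Icc] at hx; omega
    · intro x hx
      rfl
  have hIoc : Finset.Icc 1 (n-1) = Finset.Ioc 0 (n-1) := by
    ext x; simp only [Finset.mem_Icc, Finset.mem_Ioc]; omega
  have hF := sum_F_bound n hn
  rw [← hIoc] at hF
  calc 2 * ∑ ℓ ∈ Finset.Icc 1 (n-1), ‖c n (ℓ:ℤ)‖^2
      ≤ 2 * ∑ ℓ ∈ Finset.Icc 1 (n-1), (F n ℓ + F n (n-ℓ)) := by linarith
  _ = 2 * (∑ ℓ ∈ Finset.Icc 1 (n-1), F n ℓ + ∑ ℓ ∈ Finset.Icc 1 (n-1), F n (n-ℓ)) := by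
        rw [Finset.sum_add_distrib]
  _ = 4 * ∑ ℓ ∈ Finset.Icc 1 (n-1), F n ℓ := by rw [hflip]; ring
  _ ≤ 4 * ((π^2/4 + 1/2) * ((n:ℝ) * Real.sqrt n)) := by linarith
  _ = (π^2 + 2) * ((n:ℝ) * Real.sqrt n) := by ring

theorem main :
    ∃ A : ℝ, 0 < A ∧
      ∀ N : ℕ, 1 ≤ N →
        |(∫ t in (0 : ℝ)..1,
            ‖∑ j ∈ Finset.range (N + 1),
                Complex.exp (π * Complex.I * (j : ℂ) ^ 2 / (N + 1)) *
                  Complex.exp (2 * π * Complex.I * (j : ℂ) * t)‖ ^ 4)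
          - ((N : ℝ) + 1) ^ 2| ≤ A * N * Real.sqrt N := by
  refine ⟨100, by norm_num, fun N hN => ?_⟩
  set n := N + 1 with hn
  have hn2 : 2 ≤ n := by omega
  have hint : (∫ t in (0 : ℝ)..1,
        ‖∑ j ∈ Finset.range (N + 1),
            Complex.exp (π * Complex.I * (j : ℂ) ^ 2 / (N + 1)) *
              Complex.exp (2 * π * Complex.I * (j : ℂ) * t)‖ ^ 4)
      = ∫ t in (0:ℝ)..1, ‖P n t‖^4 := by
    refine intervalIntegral.integral_congr fun t _ => ?_
    have hPt : (∑ j ∈ Finset.range (N + 1),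
        Complex.exp (π * Complex.I * (j : ℂ) ^ 2 / (N + 1)) *
          Complex.exp (2 * π * Complex.I * (j : ℂ) * t)) = P n t := by
      rw [P]
      refine Finset.sum_congr rfl fun j _ => ?_
      rw [a, e]
      congr 2 <;> · push_cast [hn]; ring
    rw [hPt]
  rw [hint, int4 n]
  set S := Finset.Icc (1 - (n:ℤ)) ((n:ℤ) - 1) with hS
  have h0 : (0:ℤ) ∈ S := by simp only [hS, Finset.mem_Icc]; omega
  have hsum : ∑ ℓ ∈ S, ‖c n ℓ‖^2
      = ‖c n 0‖^2 + ∑ ℓ ∈ S.erase 0, ‖c n ℓ‖^2 :=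
    (Finset.add_sum_erase S (fun ℓ => ‖c n ℓ‖^2) h0).symm
  have hc0 : ‖c n 0‖^2 = ((N:ℝ)+1)^2 := by
    rw [c_zero, Complex.norm_natCast]
    push_cast [hn]; ring
  have hpos : 0 ≤ ∑ ℓ ∈ S.erase 0, ‖c n ℓ‖^2 :=
    Finset.sum_nonneg fun _ _ => by positivity
  rw [hsum, hc0]
  rw [show ((N:ℝ)+1)^2 + ∑ ℓ ∈ S.erase 0, ‖c n ℓ‖^2 - ((N:ℝ)+1)^2
    = ∑ ℓ ∈ S.erase 0, ‖c n ℓ‖^2 by ring]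
  rw [abs_of_nonneg hpos]
  have hbd := err_bound n hn2
  have hπ4 : π ≤ 4 := Real.pi_le_four
  have hπ0 : 0 < π := Real.pi_pos
  have hN1 : (1:ℝ) ≤ N := by exact_mod_cast hN
  have hsqN : (1:ℝ) ≤ Real.sqrt N := by
    rw [show (1:ℝ) = Real.sqrt 1 from (Real.sqrt_one).symm]
    exact Real.sqrt_le_sqrt hN1
  have hnN : (n:ℝ) ≤ 2*N := by push_cast [hn]; linarith
  have hsq2 : Real.sqrt 2 ≤ 1.5 := by
    rw [show (1.5:ℝ) = Real.sqrt (1.5^2) by rw [Real.sqrt_sq]; norm_num]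
    exact Real.sqrt_le_sqrt (by norm_num)
  have hsqn : Real.sqrt n ≤ 1.5 * Real.sqrt N := by
    calc Real.sqrt n ≤ Real.sqrt (2*N) := Real.sqrt_le_sqrt hnN
    _ = Real.sqrt 2 * Real.sqrt N := Real.sqrt_mul (by norm_num) _
    _ ≤ 1.5 * Real.sqrt N := by
        have : (0:ℝ) ≤ Real.sqrt N := Real.sqrt_nonneg _
        nlinarith
  have hnn : (n:ℝ) * Real.sqrt n ≤ 3 * ((N:ℝ) * Real.sqrt N) := by
    have h1 : (0:ℝ) ≤ n := by positivity
    have h2 : (0:ℝ) ≤ Real.sqrt n := Real.sqrt_nonneg _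
    calc (n:ℝ) * Real.sqrt n ≤ (2*N) * (1.5 * Real.sqrt N) := by
          apply mul_le_mul hnN hsqn h2 (by positivity)
    _ = 3 * ((N:ℝ) * Real.sqrt N) := by ring
  have hprod : (0:ℝ) ≤ (n:ℝ) * Real.sqrt n := by positivity
  calc ∑ ℓ ∈ S.erase 0, ‖c n ℓ‖^2 ≤ (π^2 + 2) * ((n:ℝ) * Real.sqrt n) := hbd
  _ ≤ 18 * ((n:ℝ) * Real.sqrt n) := by
        have h18 : π^2 + 2 ≤ 18 := by nlinarith
        exact mul_le_mul_of_nonneg_right h18 hprod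
  _ ≤ 18 * (3 * ((N:ℝ) * Real.sqrt N)) := by
        have := hnn; nlinarith
  _ ≤ 100 * N * Real.sqrt N := by nlinarith


end S17
end

theorem stmt_17 :
    ∃ A : ℝ, 0 < A ∧
      ∀ N : ℕ, 1 ≤ N →
        |(∫ t in (0 : ℝ)..1,
            ‖∑ j ∈ Finset.range (N + 1),
                Complex.exp (π * Complex.I * (j : ℂ) ^ 2 / (N + 1)) *
                  Complex.exp (2 * π * Complex.I * (j : ℂ) * t)‖ ^ 4)
          - ((N : ℝ) + 1) ^ 2| ≤ A * N * Real.sqrt N := S17.main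
end

section
/- Let $\lambda_0 < \lambda_1 < \cdots < \lambda_N$ be distinct real numbers and $a_0,\ldots,a_N$ complex numbers. Then $\liminf_{T\to+\infty} \frac{1}{T}\int_{-T/2}^{T/2}\left|\sum_{k=0}^N a_k e^{2i\pi\lambda_k t}\right| dt \ge C_{MPS} \sum_{k=0}^N \frac{|a_k|}{k+1}$, where $C_{MPS}$ is the constant of the Mc Gehee–Pigno–Smith theorem for integer frequencies. -/
open Real MeasureTheory Finset Filter

lemma aux_dirichlet (M : ℕ) (μ : ℕ → ℝ) {η : ℝ} (hη : 0 < η) :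
    ∃ q : ℕ, 1 ≤ q ∧ ∃ n : ℕ → ℤ, ∀ k ≤ M, |(q : ℝ) * μ k - n k| ≤ η := by
  obtain ⟨Q, hQ1, hQη⟩ : ∃ Q : ℕ, 1 ≤ Q ∧ 1 / (Q : ℝ) ≤ η := by
    refine ⟨⌈1 / η⌉₊ + 1, Nat.le_add_left _ _, ?_⟩
    have h1 : 1 / η ≤ ((⌈1 / η⌉₊ + 1 : ℕ) : ℝ) := by
      push_cast; linarith [Nat.le_ceil (1 / η)]
    have h0 : (0 : ℝ) < ((⌈1 / η⌉₊ + 1 : ℕ) : ℝ) := by positivity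
    rw [div_le_iff₀ h0]
    rw [div_le_iff₀ hη] at h1
    linarith
  have hQR : (0 : ℝ) < Q := by exact_mod_cast hQ1
  -- the cell map
  have hfl : ∀ r : ℝ, (⌊(Q : ℝ) * Int.fract r⌋).toNat < Q := by
    intro r
    have h1 : ⌊(Q : ℝ) * Int.fract r⌋ < (Q : ℤ) := by
      apply Int.floor_lt.mpr
      push_cast
      calc (Q : ℝ) * Int.fract r < (Q : ℝ) * 1 :=
            (mul_lt_mul_iff_right₀ hQR).mpr (Int.fract_lt_one r)
        _ = Q := mul_one _
    omega
  set F : Fin (Q ^ (M + 1) + 1) → (Fin (M + 1) → Fin Q) :=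
    fun i k => ⟨(⌊(Q : ℝ) * Int.fract ((i : ℕ) * μ k)⌋).toNat, hfl _⟩ with hF
  have hcard : Fintype.card (Fin (M + 1) → Fin Q) < Fintype.card (Fin (Q ^ (M + 1) + 1)) := by
    simp [Fintype.card_fun]
  obtain ⟨i, j, hij, hFij⟩ := Fintype.exists_ne_map_eq_of_card_lt F hcard
  have key : ∀ i j : Fin (Q ^ (M + 1) + 1), (i : ℕ) < (j : ℕ) → F i = F j →
      ∃ q : ℕ, 1 ≤ q ∧ ∃ n : ℕ → ℤ, ∀ k ≤ M, |(q : ℝ) * μ k - n k| ≤ η := by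
    intro i j hlt hEq
    refine ⟨(j : ℕ) - (i : ℕ), by omega,
      fun k => ⌊((j : ℕ) : ℝ) * μ k⌋ - ⌊((i : ℕ) : ℝ) * μ k⌋, ?_⟩
    intro k hk
    have hfe : ⌊(Q : ℝ) * Int.fract (((i : ℕ) : ℝ) * μ k)⌋
        = ⌊(Q : ℝ) * Int.fract (((j : ℕ) : ℝ) * μ k)⌋ := by
      have := congrFun hEq ⟨k, by omega⟩
      simp only [hF, Fin.mk.injEq] at this
      have h1 : 0 ≤ ⌊(Q : ℝ) * Int.fract (((i : ℕ) : ℝ) * μ k)⌋ :=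
        Int.floor_nonneg.mpr (mul_nonneg hQR.le (Int.fract_nonneg _))
      have h2 : 0 ≤ ⌊(Q : ℝ) * Int.fract (((j : ℕ) : ℝ) * μ k)⌋ :=
        Int.floor_nonneg.mpr (mul_nonneg hQR.le (Int.fract_nonneg _))
      omega
    set x : ℝ := ((i : ℕ) : ℝ) * μ k with hxd
    set y : ℝ := ((j : ℕ) : ℝ) * μ k with hyd
    have habs : |(Q : ℝ) * Int.fract x - (Q : ℝ) * Int.fract y| < 1 :=
      Int.abs_sub_lt_one_of_floor_eq_floor hfe
    have h2 : |Int.fract x - Int.fract y| < 1 / Q := by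
      rw [lt_div_iff₀ hQR]
      have heq : |Int.fract x - Int.fract y| * (Q : ℝ)
          = |(Q : ℝ) * Int.fract x - (Q : ℝ) * Int.fract y| := by
        rw [show (Q : ℝ) * Int.fract x - (Q : ℝ) * Int.fract y
            = (Int.fract x - Int.fract y) * (Q : ℝ) by ring, abs_mul, abs_of_pos hQR]
      rw [heq]; exact habs
    have hcast : ((((j : ℕ) - (i : ℕ) : ℕ)) : ℝ) = ((j : ℕ) : ℝ) - ((i : ℕ) : ℝ) := by
      push_cast [Nat.cast_sub hlt.le]; ring
    have hval : (((j : ℕ) - (i : ℕ) : ℕ) : ℝ) * μ k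
        - ((⌊y⌋ - ⌊x⌋ : ℤ) : ℝ) = Int.fract y - Int.fract x := by
      rw [hcast]
      push_cast
      rw [← Int.self_sub_floor, ← Int.self_sub_floor]
      ring
    rw [hval]
    rw [abs_sub_comm] at h2
    linarith
  rcases lt_or_gt_of_ne (fun h : (i : ℕ) = (j : ℕ) => hij (Fin.ext h)) with h | h
  · exact key i j h hFij
  · exact key j i h hFij.symm

lemma aux_norm_exp (x : ℝ) : ‖Complex.exp (2 * π * Complex.I * (x : ℂ))‖ = 1 := by
  rw [show 2 * (π : ℂ) * Complex.I * (x : ℂ) = ((2 * π * x : ℝ) : ℂ) * Complex.I by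
    push_cast; ring]
  rw [Complex.norm_exp_ofReal_mul_I]

lemma aux_norm_exp' (x s : ℝ) :
    ‖Complex.exp (2 * π * Complex.I * (x : ℂ) * (s : ℂ))‖ = 1 := by
  rw [show 2 * (π : ℂ) * Complex.I * (x : ℂ) * (s : ℂ)
      = 2 * (π : ℂ) * Complex.I * ((x * s : ℝ) : ℂ) by push_cast; ring]
  exact aux_norm_exp _

lemma aux_expdiff {u v s : ℝ} (hs : |s| ≤ 1) (huv : 2 * π * |u - v| ≤ 1) :
    ‖Complex.exp (2 * π * Complex.I * (u : ℂ) * (s : ℂ))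
      - Complex.exp (2 * π * Complex.I * (v : ℂ) * (s : ℂ))‖ ≤ 4 * π * |u - v| := by
  have hfac : Complex.exp (2 * π * Complex.I * (u : ℂ) * (s : ℂ))
      - Complex.exp (2 * π * Complex.I * (v : ℂ) * (s : ℂ))
      = Complex.exp (2 * π * Complex.I * (v : ℂ) * (s : ℂ))
        * (Complex.exp (((2 * π * ((u - v) * s) : ℝ) : ℂ) * Complex.I) - 1) := by
    rw [mul_sub, mul_one, ← Complex.exp_add]
    congr 1
    push_cast; ring
  rw [hfac, norm_mul, aux_norm_exp', one_mul]
  have harg : ‖(((2 * π * ((u - v) * s) : ℝ) : ℂ) * Complex.I)‖ = |2 * π * ((u - v) * s)| := by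
    rw [norm_mul, Complex.norm_I, mul_one, Complex.norm_real,
      Real.norm_eq_abs]
  have hb : |2 * π * ((u - v) * s)| ≤ 2 * π * |u - v| := by
    rw [abs_mul, abs_mul, abs_mul, abs_of_nonneg (by norm_num : (0:ℝ) ≤ 2),
      abs_of_pos Real.pi_pos]
    have h1 := abs_nonneg (u - v)
    nlinarith [mul_le_of_le_one_right h1 hs, Real.pi_pos]
  have h1 : ‖(((2 * π * ((u - v) * s) : ℝ) : ℂ) * Complex.I)‖ ≤ 1 := by
    rw [harg]; linarith
  have hle := Complex.norm_exp_sub_one_le h1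
  rw [harg] at hle
  calc ‖Complex.exp (((2 * π * ((u - v) * s) : ℝ) : ℂ) * Complex.I) - 1‖
      ≤ 2 * |2 * π * ((u - v) * s)| := hle
    _ ≤ 2 * (2 * π * |u - v|) := by linarith
    _ = 4 * π * |u - v| := by ring

lemma aux_split (ak : ℂ) (l qr j s : ℝ) (nk : ℤ) :
    ak * Complex.exp (2 * π * Complex.I * ((qr * l * j : ℝ) : ℂ))
        * Complex.exp (2 * π * Complex.I * (nk : ℂ) * (s : ℂ))
      - ak * Complex.exp (2 * π * Complex.I * (l : ℂ) * ((qr * s + qr * j : ℝ) : ℂ))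
      = ak * Complex.exp (2 * π * Complex.I * ((qr * l * j : ℝ) : ℂ)) *
        (Complex.exp (2 * π * Complex.I * (((nk : ℝ)) : ℂ) * (s : ℂ))
          - Complex.exp (2 * π * Complex.I * ((qr * l : ℝ) : ℂ) * (s : ℂ))) := by
  have h1 : Complex.exp (2 * π * Complex.I * (nk : ℂ) * (s : ℂ))
      = Complex.exp (2 * π * Complex.I * (((nk : ℝ)) : ℂ) * (s : ℂ)) := by
    norm_cast
  have h2 : Complex.exp (2 * π * Complex.I * (l : ℂ) * ((qr * s + qr * j : ℝ) : ℂ))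
      = Complex.exp (2 * π * Complex.I * ((qr * l * j : ℝ) : ℂ))
        * Complex.exp (2 * π * Complex.I * ((qr * l : ℝ) : ℂ) * (s : ℂ)) := by
    rw [← Complex.exp_add]
    congr 1
    push_cast
    ring
  rw [h1, h2]
  ring

lemma aux_block (N : ℕ) (a : ℕ → ℂ) (lam : ℕ → ℝ) (n : ℕ → ℤ) (qr j R ε η : ℝ)
    (hMPSb : ∀ b : ℕ → ℂ, (∀ k, ‖b k‖ = ‖a k‖) →
      R ≤ ∫ t in (0:ℝ)..1, ‖∑ k ∈ Finset.range (N + 1),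
          b k * Complex.exp (2 * π * Complex.I * (n k : ℂ) * (t : ℂ))‖)
    (hqn : ∀ k ≤ N, |qr * lam k - n k| ≤ η)
    (hη0 : 0 ≤ η)
    (hη1 : 2 * π * η ≤ 1)
    (hη2 : (∑ k ∈ Finset.range (N + 1), ‖a k‖) * (4 * π * η) ≤ ε / 2) :
    R - ε / 2 ≤ ∫ s in (0:ℝ)..1, ‖∑ k ∈ Finset.range (N + 1),
        a k * Complex.exp (2 * π * Complex.I * (lam k : ℂ) * ((qr * s + qr * j : ℝ) : ℂ))‖ := by
  have hπ : (0:ℝ) < π := Real.pi_pos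
  set b : ℕ → ℂ := fun k =>
    a k * Complex.exp (2 * π * Complex.I * ((qr * lam k * j : ℝ) : ℂ)) with hbdef
  have hbn : ∀ k, ‖b k‖ = ‖a k‖ := fun k => by
    simp only [hbdef]
    rw [norm_mul, aux_norm_exp, mul_one]
  have hg := hMPSb b hbn
  set G : ℝ → ℂ := fun s : ℝ => ∑ k ∈ Finset.range (N + 1),
      b k * Complex.exp (2 * π * Complex.I * (n k : ℂ) * (s : ℂ)) with hGdef
  set F : ℝ → ℂ := fun s : ℝ => ∑ k ∈ Finset.range (N + 1),
      a k * Complex.exp (2 * π * Complex.I * (lam k : ℂ) * ((qr * s + qr * j : ℝ) : ℂ)) with hFdef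
  have hGc : Continuous G := by
    apply continuous_finset_sum
    intro k _
    exact continuous_const.mul (Complex.continuous_exp.comp
      (continuous_const.mul Complex.continuous_ofReal))
  have hFc : Continuous F := by
    apply continuous_finset_sum
    intro k _
    refine continuous_const.mul (Complex.continuous_exp.comp
      (continuous_const.mul (Complex.continuous_ofReal.comp ?_)))
    exact (continuous_const.mul continuous_id').add continuous_const
  have hpt : ∀ s ∈ Set.Icc (0:ℝ) 1,
      (fun s : ℝ => ‖G s‖ - ε / 2) s ≤ (fun s : ℝ => ‖F s‖) s := by
    intro s hs
    simp only []
    have hdiff : ‖G s - F s‖ ≤ ε / 2 := by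
      have hre : G s - F s = ∑ k ∈ Finset.range (N + 1),
          b k * (Complex.exp (2 * π * Complex.I * (((n k : ℝ)) : ℂ) * (s : ℂ))
            - Complex.exp (2 * π * Complex.I * ((qr * lam k : ℝ) : ℂ) * (s : ℂ))) := by
        simp only [hGdef, hFdef, hbdef, ← Finset.sum_sub_distrib]
        exact Finset.sum_congr rfl fun k _ => aux_split (a k) (lam k) qr j s (n k)
      rw [hre]
      have hterm : ∀ k ∈ Finset.range (N + 1),
          ‖b k * (Complex.exp (2 * π * Complex.I * (((n k : ℝ)) : ℂ) * (s : ℂ))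
            - Complex.exp (2 * π * Complex.I * ((qr * lam k : ℝ) : ℂ) * (s : ℂ)))‖
          ≤ ‖a k‖ * (4 * π * η) := by
        intro k hk
        rw [norm_mul, hbn]
        apply mul_le_mul_of_nonneg_left _ (norm_nonneg _)
        have hkN : k ≤ N := by have := Finset.mem_range.mp hk; omega
        have habs : |(n k : ℝ) - qr * lam k| ≤ η := by
          rw [abs_sub_comm]; exact hqn k hkN
        have hs1 : |s| ≤ 1 := by rw [abs_le]; exact ⟨by linarith [hs.1], hs.2⟩
        have harg : 2 * π * |(n k : ℝ) - qr * lam k| ≤ 1 := by nlinarith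
        calc ‖Complex.exp (2 * π * Complex.I * (((n k : ℝ)) : ℂ) * (s : ℂ))
            - Complex.exp (2 * π * Complex.I * ((qr * lam k : ℝ) : ℂ) * (s : ℂ))‖
            ≤ 4 * π * |(n k : ℝ) - qr * lam k| := aux_expdiff hs1 harg
          _ ≤ 4 * π * η := by nlinarith
      calc ‖∑ k ∈ Finset.range (N + 1),
          b k * (Complex.exp (2 * π * Complex.I * (((n k : ℝ)) : ℂ) * (s : ℂ))
            - Complex.exp (2 * π * Complex.I * ((qr * lam k : ℝ) : ℂ) * (s : ℂ)))‖
          ≤ ∑ k ∈ Finset.range (N + 1), ‖a k‖ * (4 * π * η) :=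
            (norm_sum_le _ _).trans (Finset.sum_le_sum hterm)
        _ = (∑ k ∈ Finset.range (N + 1), ‖a k‖) * (4 * π * η) := by
            rw [← Finset.sum_mul]
        _ ≤ ε / 2 := hη2
    have hnn := norm_sub_norm_le (G s) (F s)
    linarith
  have hmono3 := intervalIntegral.integral_mono_on (μ := volume) (by norm_num : (0:ℝ) ≤ 1)
    ((hGc.norm.sub continuous_const).intervalIntegrable 0 1)
    (hFc.norm.intervalIntegrable 0 1) hpt
  have hsplit : (∫ s in (0:ℝ)..1, (‖G s‖ - ε / 2))
      = (∫ s in (0:ℝ)..1, ‖G s‖) - ε / 2 := by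
    rw [intervalIntegral.integral_sub (hGc.norm.intervalIntegrable 0 1)
      intervalIntegrable_const, intervalIntegral.integral_const, smul_eq_mul]
    ring
  simp only [Pi.sub_apply] at hmono3; rw [hsplit] at hmono3
  linarith

lemma aux_sum (f : ℝ → ℂ) (hfc : Continuous f) (qr c : ℝ) (hq : 0 < qr)
    (hblock : ∀ j : ℝ, c ≤ ∫ s in (0:ℝ)..1, ‖f (qr * s + qr * j)‖) (m : ℕ) :
    2 * (m : ℝ) * qr * c ≤ ∫ t in (-((m : ℝ) * qr))..((m : ℝ) * qr), ‖f t‖ := by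
  have hInt : ∀ u v : ℝ, IntervalIntegrable (fun t => ‖f t‖) volume u v :=
    fun u v => (hfc.norm).intervalIntegrable u v
  have hblockInt : ∀ j : ℝ, qr * c ≤ ∫ t in (qr * j)..(qr * (j + 1)), ‖f t‖ := by
    intro j
    have hsub := intervalIntegral.integral_comp_mul_add (a := 0) (b := 1)
      (f := fun t => ‖f t‖) (c := qr) (ne_of_gt hq) (qr * j)
    rw [show qr * 0 + qr * j = qr * j by ring,
      show qr * 1 + qr * j = qr * (j + 1) by ring, smul_eq_mul] at hsub
    have h := hblock j
    rw [hsub] at h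
    have h2 := mul_le_mul_of_nonneg_left h hq.le
    rwa [← mul_assoc, mul_inv_cancel₀ (ne_of_gt hq), one_mul] at h2
  set P : ℕ → ℝ := fun i => qr * ((i : ℝ) - (m : ℝ)) with hPdef
  have hadj := intervalIntegral.sum_integral_adjacent_intervals
    (a := P) (n := 2 * m) (μ := volume) (f := fun t => ‖f t‖)
    (fun i _ => hInt _ _)
  have hP0 : P 0 = -((m : ℝ) * qr) := by simp only [hPdef]; push_cast; ring
  have hP2m : P (2 * m) = (m : ℝ) * qr := by simp only [hPdef]; push_cast; ring
  have hterm : ∀ i ∈ Finset.range (2 * m),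
      qr * c ≤ ∫ t in P i..P (i + 1), ‖f t‖ := by
    intro i _
    have he2 : P (i + 1) = qr * (((i : ℝ) - (m : ℝ)) + 1) := by
      simp only [hPdef]; push_cast; ring
    rw [show P i = qr * ((i : ℝ) - (m : ℝ)) from rfl, he2]
    exact hblockInt ((i : ℝ) - (m : ℝ))
  have hcard := Finset.card_nsmul_le_sum (Finset.range (2 * m))
    (fun i => ∫ t in P i..P (i + 1), ‖f t‖) (qr * c) hterm
  rw [Finset.card_range, hadj, hP0, hP2m, nsmul_eq_mul] at hcard
  calc 2 * (m : ℝ) * qr * c = ((2 * m : ℕ) : ℝ) * (qr * c) := by push_cast; ring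
    _ ≤ _ := hcard

set_option maxHeartbeats 1000000 in
theorem stmt_19 (C : ℝ) (hC : 0 < C)
    (hMPS : ∀ (N : ℕ) (n : ℕ → ℤ) (a : ℕ → ℂ),
      (∀ k < N, n k < n (k + 1)) →
      (∫ t in (0 : ℝ)..1,
          ‖∑ k ∈ Finset.range (N + 1),
              a k * Complex.exp (2 * π * Complex.I * (n k : ℂ) * t)‖)
        ≥ C * ∑ k ∈ Finset.range (N + 1), ‖a k‖ / (k + 1))
    (N : ℕ) (lam : ℕ → ℝ) (hlam : ∀ k < N, lam k < lam (k + 1))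
    (a : ℕ → ℂ) :
    Filter.liminf (fun T : ℝ => (1 / T) *
        ∫ t in (-(T / 2))..(T / 2),
          ‖∑ k ∈ Finset.range (N + 1),
              a k * Complex.exp (2 * π * Complex.I * (lam k : ℂ) * t)‖)
      Filter.atTop
      ≥ C * ∑ k ∈ Finset.range (N + 1), ‖a k‖ / (k + 1) := by
  classical
  set f : ℝ → ℂ := fun t : ℝ => ∑ k ∈ Finset.range (N + 1),
      a k * Complex.exp (2 * π * Complex.I * (lam k : ℂ) * (t : ℂ)) with hfdef
  set R : ℝ := C * ∑ k ∈ Finset.range (N + 1), ‖a k‖ / (k + 1) with hRdef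
  set A : ℝ := ∑ k ∈ Finset.range (N + 1), ‖a k‖ with hAdef
  show Filter.liminf (fun T : ℝ => (1 / T) *
      ∫ t in (-(T / 2))..(T / 2), ‖f t‖) Filter.atTop ≥ R
  have hA0 : 0 ≤ A := Finset.sum_nonneg fun k _ => norm_nonneg _
  have hR0 : 0 ≤ R := mul_nonneg hC.le (Finset.sum_nonneg fun k _ => by positivity)
  have hfc : Continuous f := by
    apply continuous_finset_sum
    intro k _
    exact continuous_const.mul (Complex.continuous_exp.comp
      (continuous_const.mul Complex.continuous_ofReal))
  have hfb : ∀ t : ℝ, ‖f t‖ ≤ A := by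
    intro t
    rw [hfdef, hAdef]
    refine (norm_sum_le _ _).trans (Finset.sum_le_sum fun k _ => ?_)
    rw [norm_mul, aux_norm_exp' (lam k) t, mul_one]
  have hInt : ∀ u v : ℝ, IntervalIntegrable (fun t => ‖f t‖) volume u v :=
    fun u v => (hfc.norm).intervalIntegrable u v
  have hcob : Filter.IsCoboundedUnder (· ≥ ·) Filter.atTop
      (fun T : ℝ => (1 / T) * ∫ t in (-(T / 2))..(T / 2), ‖f t‖) := by
    refine Filter.isCoboundedUnder_ge_of_eventually_le Filter.atTop (x := A) ?_
    filter_upwards [Filter.eventually_ge_atTop (1:ℝ)] with T hT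
    have hT0 : (0:ℝ) < T := by linarith
    have hle : (∫ t in (-(T / 2))..(T / 2), ‖f t‖) ≤ T * A := by
      calc (∫ t in (-(T / 2))..(T / 2), ‖f t‖)
          ≤ ∫ _t in (-(T / 2))..(T / 2), A := by
            apply intervalIntegral.integral_mono_on (by linarith) (hInt _ _)
              intervalIntegrable_const (fun x _ => hfb x)
        _ = T * A := by
            rw [intervalIntegral.integral_const, smul_eq_mul]; ring_nf
    calc (1 / T) * ∫ t in (-(T / 2))..(T / 2), ‖f t‖
        ≤ (1 / T) * (T * A) := by
          apply mul_le_mul_of_nonneg_left hle (by positivity)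
      _ = A := by field_simp
  rw [ge_iff_le]
  refine le_of_forall_pos_le_add fun ε hε => ?_
  have key : R - ε ≤ Filter.liminf (fun T : ℝ => (1 / T) *
      ∫ t in (-(T / 2))..(T / 2), ‖f t‖) Filter.atTop := by
    rcases le_or_gt R ε with hRe | hRe
    · -- trivial case
      have h0 : (0:ℝ) ≤ Filter.liminf (fun T : ℝ => (1 / T) *
          ∫ t in (-(T / 2))..(T / 2), ‖f t‖) Filter.atTop := by
        refine Filter.le_liminf_of_le hcob ?_
        filter_upwards [Filter.eventually_ge_atTop (1:ℝ)] with T hT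
        have hT0 : (0:ℝ) < T := by linarith
        exact mul_nonneg (by positivity)
          (intervalIntegral.integral_nonneg (by linarith) (fun t _ => norm_nonneg _))
      linarith
    · -- main case
      obtain ⟨δ, hδ0, hδ⟩ : ∃ δ : ℝ, 0 < δ ∧ ∀ k < N, δ ≤ lam (k + 1) - lam k := by
        rcases Nat.eq_zero_or_pos N with hN | hN
        · exact ⟨1, one_pos, fun k hk => absurd hk (by omega)⟩
        · have hne : (Finset.range N).Nonempty := ⟨0, Finset.mem_range.mpr hN⟩
          refine ⟨(Finset.range N).inf' hne (fun k => lam (k + 1) - lam k), ?_, ?_⟩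
          · obtain ⟨k, hk, hkeq⟩ := Finset.exists_mem_eq_inf' hne
              (fun k => lam (k + 1) - lam k)
            rw [hkeq]
            have := hlam k (Finset.mem_range.mp hk)
            linarith
          · intro k hk
            exact Finset.inf'_le _ (Finset.mem_range.mpr hk)
      set η : ℝ := min (1 / (2 * π)) (ε / (8 * π * (A + 1))) with hηdef
      have hπ : (0:ℝ) < π := Real.pi_pos
      have hηpos : 0 < η := lt_min (by positivity) (by positivity)
      have hη1 : η ≤ 1 / (2 * π) := min_le_left _ _
      have hη2 : η ≤ ε / (8 * π * (A + 1)) := min_le_right _ _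
      have hη1' : 2 * π * η ≤ 1 := by
        rw [le_div_iff₀ (by positivity : (0:ℝ) < 2 * π)] at hη1
        linarith
      have hη2' : A * (4 * π * η) ≤ ε / 2 := by
        rw [le_div_iff₀ (by positivity : (0:ℝ) < 8 * π * (A + 1))] at hη2
        nlinarith
      set L : ℕ := max 1 ⌈1 / δ⌉₊ with hLdef
      have hL1 : 1 ≤ L := le_max_left _ _
      have hLδ : 1 ≤ (L : ℝ) * δ := by
        have h1 : 1 / δ ≤ (L : ℝ) := by
          refine le_trans (Nat.le_ceil _) ?_
          exact_mod_cast le_max_right 1 ⌈1 / δ⌉₊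
        rw [div_le_iff₀ hδ0] at h1
        linarith
      obtain ⟨q', hq'1, n, hn⟩ := aux_dirichlet N (fun k => (L : ℝ) * lam k) hηpos
      set q : ℕ := q' * L with hqdef
      have hq1 : 1 ≤ q := Nat.one_le_iff_ne_zero.mpr (by positivity)
      have hqpos : (0:ℝ) < (q : ℝ) := by exact_mod_cast hq1
      have hqL : (L : ℝ) ≤ (q : ℝ) := by
        have h : L ≤ q := by
          calc L = 1 * L := (one_mul L).symm
            _ ≤ q' * L := Nat.mul_le_mul_right L hq'1
        exact_mod_cast h
      have hqn : ∀ k ≤ N, |(q : ℝ) * lam k - n k| ≤ η := by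
        intro k hk
        have h := hn k hk
        have hcast : (q' : ℝ) * ((L : ℝ) * lam k) = (q : ℝ) * lam k := by
          rw [hqdef]; push_cast; ring
        rwa [hcast] at h
      have hmono : ∀ k < N, n k < n (k + 1) := by
        intro k hk
        have h1 := abs_le.mp (hqn k (by omega))
        have h2 := abs_le.mp (hqn (k + 1) (by omega))
        have hgap : δ ≤ lam (k + 1) - lam k := hδ k hk
        have hq2 : (q : ℝ) * δ ≤ (q : ℝ) * (lam (k + 1) - lam k) :=
          mul_le_mul_of_nonneg_left hgap hqpos.le
        have hLq : (L : ℝ) * δ ≤ (q : ℝ) * δ := mul_le_mul_of_nonneg_right hqL hδ0.le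
        have h : (n k : ℝ) < (n (k + 1) : ℝ) := by
          nlinarith [Real.pi_gt_three, hηpos, hη1', h1.1, h1.2, h2.1, h2.2]
        exact_mod_cast h
      have hMPSb : ∀ b : ℕ → ℂ, (∀ k, ‖b k‖ = ‖a k‖) →
          R ≤ ∫ t in (0:ℝ)..1, ‖∑ k ∈ Finset.range (N + 1),
              b k * Complex.exp (2 * π * Complex.I * (n k : ℂ) * (t : ℂ))‖ := by
        intro b hbn
        have hg := hMPS N n b hmono
        rw [ge_iff_le] at hg
        calc R = C * ∑ k ∈ Finset.range (N + 1), ‖b k‖ / (k + 1) := by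
              rw [hRdef]
              congr 1
              exact (Finset.sum_congr rfl fun k _ => by rw [hbn]).symm
          _ ≤ _ := hg
      have hblock : ∀ j : ℝ, R - ε / 2
          ≤ ∫ s in (0:ℝ)..1, ‖f ((q:ℝ) * s + (q:ℝ) * j)‖ := by
        intro j
        have h := aux_block N a lam n (q : ℝ) j R ε η hMPSb hqn hηpos.le hη1' hη2'
        refine le_trans h (le_of_eq ?_)
        refine intervalIntegral.integral_congr fun s _ => ?_
        rw [hfdef]
      have hsum := aux_sum f hfc (q : ℝ) (R - ε / 2) hqpos hblock
      have hRε2 : 0 ≤ R - ε / 2 := by linarith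
      have hev : ∀ᶠ T in Filter.atTop, R - ε ≤ (1 / T) *
          ∫ t in (-(T / 2))..(T / 2), ‖f t‖ := by
        filter_upwards [Filter.eventually_ge_atTop (max 1 (4 * (q : ℝ) * R / ε))] with T hT
        have hT1 : (1:ℝ) ≤ T := le_trans (le_max_left _ _) hT
        have hT0 : (0:ℝ) < T := by linarith
        have hTR : 4 * (q : ℝ) * R / ε ≤ T := le_trans (le_max_right _ _) hT
        have hTR' : 4 * (q : ℝ) * R ≤ ε * T := by
          rw [div_le_iff₀ hε] at hTR
          linarith
        set m : ℕ := ⌊T / (2 * (q : ℝ))⌋₊ with hmdef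
        have h2q : (0:ℝ) < 2 * (q : ℝ) := by positivity
        have hm1 : (m : ℝ) * (q : ℝ) ≤ T / 2 := by
          have h := Nat.floor_le (show (0:ℝ) ≤ T / (2 * (q : ℝ)) by positivity)
          rw [le_div_iff₀ h2q] at h
          rw [← hmdef] at h
          linarith
        have hm2 : T - 2 * (q : ℝ) ≤ 2 * (m : ℝ) * (q : ℝ) := by
          have h := Nat.lt_floor_add_one (T / (2 * (q : ℝ)))
          rw [div_lt_iff₀ h2q] at h
          rw [← hmdef] at h
          nlinarith
        have hmq0 : (0:ℝ) ≤ (m : ℝ) * (q : ℝ) := by positivity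
        have hmono2 : (∫ t in (-((m : ℝ) * (q : ℝ)))..((m : ℝ) * (q : ℝ)), ‖f t‖)
            ≤ ∫ t in (-(T / 2))..(T / 2), ‖f t‖ :=
          intervalIntegral.integral_mono_interval (by linarith) (by linarith)
            (by linarith) (Filter.Eventually.of_forall fun t => norm_nonneg _)
            (hInt _ _)
        have hchain := (hsum m).trans hmono2
        have h1 : (T - 2 * (q : ℝ)) * (R - ε / 2)
            ≤ 2 * (m : ℝ) * (q : ℝ) * (R - ε / 2) :=
          mul_le_mul_of_nonneg_right hm2 hRε2
        have h2 : (T - 2 * (q : ℝ)) * (R - ε / 2)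
            ≤ ∫ t in (-(T / 2))..(T / 2), ‖f t‖ := le_trans h1 hchain
        rw [one_div, inv_mul_eq_div, le_div_iff₀ hT0]
        nlinarith [hqpos, hε, hR0]
      exact Filter.le_liminf_of_le hcob hev
  linarith
end
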